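/- arXiv:1806.09975 — 8 statements merged into one kernel-verified Lean document; each statement's English description precedes it below -/
import Mathlib

section
/- Let α ∈ (0,1). If f, g : ℝ → ℝ are bounded functions for which D_α[f](x) and D_α[g](x) are defined (the defining integrals converge absolutely for every x ∈ ℝ), then for every x ∈ ℝ the product f·g satisfies D_α[f·g](x) = f(x)·D_α[g](x) + g(x)·D_α[f](x) − Λ_α[f,g](x) (extended product rule for the positive fractional derivative). -/
open MeasureTheory Set

/-- The positive fractional derivative in generator form:
`D_α[f](x) = (α/Γ(1−α)) ∫₀^∞ (f(x) − f(x−y)) y^{−1−α} dy`. -/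
noncomputable def Dpos (α : ℝ) (f : ℝ → ℝ) (x : ℝ) : ℝ :=
  α / Real.Gamma (1 - α) * ∫ y in Ioi (0 : ℝ), (f x - f (x - y)) / y ^ (1 + α)

/-- The bilinear operator
`Λ_α[f,g](x) = (α/Γ(1−α)) ∫₀^∞ (f(x) − f(x−y))(g(x) − g(x−y)) y^{−1−α} dy`. -/
noncomputable def LambdaPos (α : ℝ) (f g : ℝ → ℝ) (x : ℝ) : ℝ :=
  α / Real.Gamma (1 - α) *
    ∫ y in Ioi (0 : ℝ), (f x - f (x - y)) * (g x - g (x - y)) / y ^ (1 + α)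

/-- Extended product rule for the positive fractional derivative. -/
theorem extended_product_rule_pos (α : ℝ) (hα : α ∈ Ioo (0 : ℝ) 1)
    (f g : ℝ → ℝ) (Cf Cg : ℝ)
    (hfb : ∀ x, |f x| ≤ Cf) (hgb : ∀ x, |g x| ≤ Cg)
    (hfI : ∀ x : ℝ,
      IntegrableOn (fun y => (f x - f (x - y)) / y ^ (1 + α)) (Ioi (0 : ℝ)))
    (hgI : ∀ x : ℝ,
      IntegrableOn (fun y => (g x - g (x - y)) / y ^ (1 + α)) (Ioi (0 : ℝ))) :
    ∀ x : ℝ, Dpos α (fun t => f t * g t) x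
      = f x * Dpos α g x + g x * Dpos α f x - LambdaPos α f g x := by
  intro x
  have hf := hfI x
  have hg := hgI x
  -- `g x - g (x - ·)` is a.e. strongly measurable on `Ioi 0`
  have hgm : AEStronglyMeasurable (fun y => g x - g (x - y))
      (volume.restrict (Ioi (0 : ℝ))) := by
    have h1 : AEStronglyMeasurable
        (fun y => (g x - g (x - y)) / y ^ (1 + α) * y ^ (1 + α))
        (volume.restrict (Ioi (0 : ℝ))) :=
      hg.aestronglyMeasurable.mul
        (Measurable.aestronglyMeasurable (by fun_prop))
    refine h1.congr ?_
    filter_upwards [ae_restrict_mem measurableSet_Ioi] with y hy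
    rw [div_mul_cancel₀]
    exact (Real.rpow_pos_of_pos hy _).ne'
  -- the Λ-integrand is integrable
  have hΛ : IntegrableOn
      (fun y => (f x - f (x - y)) * (g x - g (x - y)) / y ^ (1 + α))
      (Ioi (0 : ℝ)) := by
    have heq : (fun y => (f x - f (x - y)) * (g x - g (x - y)) / y ^ (1 + α))
        = fun y => (f x - f (x - y)) / y ^ (1 + α) * (g x - g (x - y)) := by
      funext y; rw [div_mul_eq_mul_div]
    rw [heq]
    refine Integrable.mono' ((hf.norm).const_mul (2 * Cg))
      (hf.aestronglyMeasurable.mul hgm) ?_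
    filter_upwards with y
    rw [norm_mul]
    have hgd : ‖g x - g (x - y)‖ ≤ 2 * Cg := by
      have := hgb x; have := hgb (x - y)
      rw [Real.norm_eq_abs]
      calc |g x - g (x - y)| ≤ |g x| + |g (x - y)| := abs_sub _ _
        _ ≤ 2 * Cg := by linarith
    calc ‖(f x - f (x - y)) / y ^ (1 + α)‖ * ‖g x - g (x - y)‖
        ≤ ‖(f x - f (x - y)) / y ^ (1 + α)‖ * (2 * Cg) :=
          mul_le_mul_of_nonneg_left hgd (norm_nonneg _)
      _ = 2 * Cg * ‖(f x - f (x - y)) / y ^ (1 + α)‖ := by ring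
  -- the key integral identity
  have key : (∫ y in Ioi (0 : ℝ), (f x * g x - f (x - y) * g (x - y)) / y ^ (1 + α))
      = f x * (∫ y in Ioi (0 : ℝ), (g x - g (x - y)) / y ^ (1 + α))
        + g x * (∫ y in Ioi (0 : ℝ), (f x - f (x - y)) / y ^ (1 + α))
        - ∫ y in Ioi (0 : ℝ),
            (f x - f (x - y)) * (g x - g (x - y)) / y ^ (1 + α) := by
    have hfun : (fun y => (f x * g x - f (x - y) * g (x - y)) / y ^ (1 + α))
        = fun y => f x * ((g x - g (x - y)) / y ^ (1 + α))
            + g x * ((f x - f (x - y)) / y ^ (1 + α))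
            - (f x - f (x - y)) * (g x - g (x - y)) / y ^ (1 + α) := by
      funext y
      rw [div_eq_mul_inv, div_eq_mul_inv, div_eq_mul_inv, div_eq_mul_inv]
      ring
    have h1 : IntegrableOn (fun y => f x * ((g x - g (x - y)) / y ^ (1 + α))
        + g x * ((f x - f (x - y)) / y ^ (1 + α))) (Ioi (0 : ℝ)) :=
      (hg.const_mul (f x)).add (hf.const_mul (g x))
    rw [hfun, integral_sub h1 hΛ,
      integral_add (hg.const_mul (f x)) (hf.const_mul (g x)),
      MeasureTheory.integral_const_mul, MeasureTheory.integral_const_mul]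
  simp only [Dpos, LambdaPos]
  rw [key]
  ring
end

section
/- Let α ∈ (0,1). If f, g : ℝ → ℝ are bounded functions for which D_α^-[f](x) and D_α^-[g](x) are defined (the defining integrals converge absolutely for every x ∈ ℝ), then for every x ∈ ℝ the product f·g satisfies D_α^-[f·g](x) = f(x)·D_α^-[g](x) + g(x)·D_α^-[f](x) − Λ_α^-[f,g](x) (extended product rule for the negative fractional derivative). -/
open MeasureTheory Set

/-- The negative fractional derivative in generator form:
`D_α^-[f](x) = (α/Γ(1−α)) ∫₀^∞ (f(x) − f(x+y)) y^{−1−α} dy`. -/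
noncomputable def Dneg (α : ℝ) (f : ℝ → ℝ) (x : ℝ) : ℝ :=
  α / Real.Gamma (1 - α) * ∫ y in Ioi (0 : ℝ), (f x - f (x + y)) / y ^ (1 + α)

/-- The bilinear operator
`Λ_α^-[f,g](x) = (α/Γ(1−α)) ∫₀^∞ (f(x) − f(x+y))(g(x) − g(x+y)) y^{−1−α} dy`. -/
noncomputable def LambdaNeg (α : ℝ) (f g : ℝ → ℝ) (x : ℝ) : ℝ :=
  α / Real.Gamma (1 - α) *
    ∫ y in Ioi (0 : ℝ), (f x - f (x + y)) * (g x - g (x + y)) / y ^ (1 + α)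

/-- Extended product rule for the negative fractional derivative. -/
theorem extended_product_rule_neg (α : ℝ) (hα : α ∈ Ioo (0 : ℝ) 1)
    (f g : ℝ → ℝ) (Cf Cg : ℝ)
    (hfb : ∀ x, |f x| ≤ Cf) (hgb : ∀ x, |g x| ≤ Cg)
    (hfI : ∀ x : ℝ,
      IntegrableOn (fun y => (f x - f (x + y)) / y ^ (1 + α)) (Ioi (0 : ℝ)))
    (hgI : ∀ x : ℝ,
      IntegrableOn (fun y => (g x - g (x + y)) / y ^ (1 + α)) (Ioi (0 : ℝ))) :
    ∀ x : ℝ, Dneg α (fun t => f t * g t) x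
      = f x * Dneg α g x + g x * Dneg α f x - LambdaNeg α f g x := by
  intro x
  set F : ℝ → ℝ := fun y => (f x - f (x + y)) / y ^ (1 + α) with hF
  set G : ℝ → ℝ := fun y => (g x - g (x + y)) / y ^ (1 + α) with hG
  set L : ℝ → ℝ := fun y => (f x - f (x + y)) * (g x - g (x + y)) / y ^ (1 + α) with hL
  have hLF : ∀ y : ℝ, L y = (f x - f (x + y)) * G y := by
    intro y; simp only [hL, hG, mul_div_assoc]
  -- integrability of L
  have hLint : IntegrableOn L (Ioi (0 : ℝ)) := by
    have hmeas : AEStronglyMeasurable L (volume.restrict (Ioi (0 : ℝ))) := by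
      have h1 : AEStronglyMeasurable (fun y : ℝ => (F y * y ^ (1 + α)) * G y)
          (volume.restrict (Ioi (0 : ℝ))) :=
        (((hfI x).aestronglyMeasurable.mul
          ((show Measurable fun y : ℝ => y ^ (1 + α) by fun_prop).aestronglyMeasurable)).mul
          (hgI x).aestronglyMeasurable)
      refine h1.congr ?_
      filter_upwards [ae_restrict_mem measurableSet_Ioi] with y hy
      have hy0 : (y : ℝ) ^ (1 + α) ≠ 0 := by
        exact (Real.rpow_pos_of_pos hy _).ne'
      rw [hLF y, hF]
      field_simp
    refine Integrable.mono' (((hgI x).norm.const_mul (2 * Cf))) hmeas ?_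
    filter_upwards [ae_restrict_mem measurableSet_Ioi] with y _
    rw [hLF y]
    have h1 : |f x - f (x + y)| ≤ 2 * Cf := by
      calc |f x - f (x + y)| ≤ |f x| + |f (x + y)| := abs_sub _ _
        _ ≤ Cf + Cf := add_le_add (hfb x) (hfb (x + y))
        _ = 2 * Cf := by ring
    calc ‖(f x - f (x + y)) * G y‖ = |f x - f (x + y)| * ‖G y‖ := by
          rw [norm_mul]; rfl
      _ ≤ 2 * Cf * ‖G y‖ := mul_le_mul_of_nonneg_right h1 (norm_nonneg _)
  -- integrand identity
  have hid : (fun y : ℝ => ((fun t => f t * g t) x - (fun t => f t * g t) (x + y)) / y ^ (1 + α))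
      = fun y : ℝ => f x * G y + g x * F y - L y := by
    funext y
    simp only [hF, hG, hL]
    ring
  have hInt1 : Integrable (fun y => f x * G y + g x * F y)
      (volume.restrict (Ioi (0 : ℝ))) :=
    ((hgI x).const_mul (f x)).add ((hfI x).const_mul (g x))
  simp only [Dneg, LambdaNeg, hid]
  rw [integral_sub hInt1 hLint, integral_add ((hgI x).const_mul (f x)) ((hfI x).const_mul (g x)),
    integral_const_mul, integral_const_mul]
  ring
end

section
/- Let α ∈ (0,1). If f, g : ℝ → ℝ are bounded functions for which D_α[f], D_α[g], D_α^-[f], D_α^-[g] are all defined at every x ∈ ℝ (so that 𝓛[f] and 𝓛[g] are defined), then for every x ∈ ℝ the product f·g satisfies 𝓛[f·g](x) = f(x)·𝓛[g](x) + g(x)·𝓛[f](x) + Λ_α[f,g](x) + Λ_α^-[f,g](x), where moreover 𝓛 = −D_α − D_α^- pointwise on such functions. -/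
open MeasureTheory Set

lemma myIntegrableOn_Iio_comp_neg {φ : ℝ → ℝ}
    (h : IntegrableOn (fun y => φ (-y)) (Ioi (0:ℝ))) :
    IntegrableOn φ (Iio (0:ℝ)) := by
  rw [IntegrableOn, ← Measure.map_neg_eq_self (volume : Measure ℝ)]
  have m : MeasurableEmbedding fun x : ℝ => -x := (Homeomorph.neg ℝ).measurableEmbedding
  rw [← IntegrableOn, m.integrableOn_map_iff]
  simp_rw [Function.comp_def, neg_preimage, neg_Iio, neg_zero]
  exact h

lemma mySplit (φ : ℝ → ℝ)
    (h1 : IntegrableOn (fun y => φ (-y)) (Ioi (0:ℝ)))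
    (h2 : IntegrableOn φ (Ioi (0:ℝ))) :
    IntegrableOn φ ({0}ᶜ : Set ℝ) ∧
      ∫ y in ({0}ᶜ : Set ℝ), φ y
        = (∫ y in Ioi (0:ℝ), φ (-y)) + ∫ y in Ioi (0:ℝ), φ y := by
  have hIio : IntegrableOn φ (Iio (0:ℝ)) := myIntegrableOn_Iio_comp_neg h1
  have hu : Iio (0:ℝ) ∪ Ioi 0 = ({0}ᶜ : Set ℝ) := Iio_union_Ioi
  have hd : Disjoint (Iio (0:ℝ)) (Ioi (0:ℝ)) :=
    (Iic_disjoint_Ioi le_rfl).mono_left Iio_subset_Iic_self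
  constructor
  · rw [← hu]; exact hIio.union h2
  · rw [← hu, setIntegral_union hd measurableSet_Ioi hIio h2]
    congr 1
    rw [integral_comp_neg_Ioi, neg_zero, integral_Iic_eq_integral_Iio]

lemma myGenSplit (α : ℝ) (h : ℝ → ℝ) (x : ℝ)
    (hIpos : IntegrableOn (fun y => (h x - h (x - y)) / y ^ (1 + α)) (Ioi (0:ℝ)))
    (hIneg : IntegrableOn (fun y => (h x - h (x + y)) / y ^ (1 + α)) (Ioi (0:ℝ))) :
    IntegrableOn (fun y => (h (x + y) - h x) / |y| ^ (1 + α)) ({0}ᶜ : Set ℝ) ∧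
      ∫ y in ({0}ᶜ : Set ℝ), (h (x + y) - h x) / |y| ^ (1 + α)
        = -(∫ y in Ioi (0:ℝ), (h x - h (x - y)) / y ^ (1 + α))
          - ∫ y in Ioi (0:ℝ), (h x - h (x + y)) / y ^ (1 + α) := by
  set φ : ℝ → ℝ := fun y => (h (x + y) - h x) / |y| ^ (1 + α) with hφ
  have e2 : EqOn (fun y => -((h x - h (x + y)) / y ^ (1 + α))) φ (Ioi (0:ℝ)) := by
    intro y hy
    simp only [φ, abs_of_pos (mem_Ioi.mp hy), ← neg_div, neg_sub]
  have e1 : EqOn (fun y => -((h x - h (x - y)) / y ^ (1 + α)))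
      (fun y => φ (-y)) (Ioi (0:ℝ)) := by
    intro y hy
    simp only [φ, abs_neg, abs_of_pos (mem_Ioi.mp hy), ← sub_eq_add_neg, ← neg_div, neg_sub]
  have h2 : IntegrableOn φ (Ioi (0:ℝ)) :=
    IntegrableOn.congr_fun hIneg.neg e2 measurableSet_Ioi
  have h1 : IntegrableOn (fun y => φ (-y)) (Ioi (0:ℝ)) :=
    IntegrableOn.congr_fun hIpos.neg e1 measurableSet_Ioi
  obtain ⟨hint, heq⟩ := mySplit φ h1 h2
  refine ⟨hint, ?_⟩
  rw [heq, ← setIntegral_congr_fun measurableSet_Ioi e1,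
    ← setIntegral_congr_fun measurableSet_Ioi e2, integral_neg, integral_neg]
  ring

lemma myCrossInt (α c d M : ℝ) (F G : ℝ → ℝ) (hb : ∀ t, |c - F t| ≤ M)
    (hFI : IntegrableOn (fun y => (c - F y) / y ^ (1 + α)) (Ioi (0:ℝ)))
    (hGI : IntegrableOn (fun y => (d - G y) / y ^ (1 + α)) (Ioi (0:ℝ))) :
    IntegrableOn (fun y => (c - F y) * (d - G y) / y ^ (1 + α)) (Ioi (0:ℝ)) := by
  simp only [mul_div_assoc]
  have hpow : AEStronglyMeasurable (fun y : ℝ => y ^ (1 + α))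
      (volume.restrict (Ioi (0:ℝ))) :=
    (by fun_prop : Measurable fun y : ℝ => y ^ (1 + α)).aestronglyMeasurable
  have hf1 : AEStronglyMeasurable (fun y => c - F y) (volume.restrict (Ioi (0:ℝ))) := by
    refine (hFI.aestronglyMeasurable.mul hpow).congr ?_
    filter_upwards [ae_restrict_mem measurableSet_Ioi] with y hy
    exact div_mul_cancel₀ _ (ne_of_gt (Real.rpow_pos_of_pos (mem_Ioi.mp hy) _))
  refine Integrable.mono' ((hGI.norm).const_mul M)
    (hf1.mul hGI.aestronglyMeasurable) ?_
  filter_upwards with y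
  rw [norm_mul]
  exact mul_le_mul_of_nonneg_right (by simpa using hb y) (norm_nonneg _)

/-- The generator of the one-dimensional symmetric α-stable process:
`𝓛[f](x) = (α/Γ(1−α)) ∫_{ℝ∖{0}} (f(x+y) − f(x)) |y|^{−1−α} dy`. -/
noncomputable def genL (α : ℝ) (f : ℝ → ℝ) (x : ℝ) : ℝ :=
  α / Real.Gamma (1 - α) *
    ∫ y in ({0}ᶜ : Set ℝ), (f (x + y) - f x) / |y| ^ (1 + α)

/-- Extended product rule for the generator `𝓛` of the symmetric stable process,
together with the pointwise identity `𝓛 = −D_α − D_α^-`. -/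
theorem extended_product_rule_generator (α : ℝ) (hα : α ∈ Ioo (0 : ℝ) 1)
    (f g : ℝ → ℝ) (Cf Cg : ℝ)
    (hfb : ∀ x, |f x| ≤ Cf) (hgb : ∀ x, |g x| ≤ Cg)
    (hfIpos : ∀ x : ℝ,
      IntegrableOn (fun y => (f x - f (x - y)) / y ^ (1 + α)) (Ioi (0 : ℝ)))
    (hgIpos : ∀ x : ℝ,
      IntegrableOn (fun y => (g x - g (x - y)) / y ^ (1 + α)) (Ioi (0 : ℝ)))
    (hfIneg : ∀ x : ℝ,
      IntegrableOn (fun y => (f x - f (x + y)) / y ^ (1 + α)) (Ioi (0 : ℝ)))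
    (hgIneg : ∀ x : ℝ,
      IntegrableOn (fun y => (g x - g (x + y)) / y ^ (1 + α)) (Ioi (0 : ℝ))) :
    (∀ x : ℝ, genL α (fun t => f t * g t) x
        = f x * genL α g x + g x * genL α f x
          + LambdaPos α f g x + LambdaNeg α f g x) ∧
    (∀ x : ℝ, genL α f x = -Dpos α f x - Dneg α f x) ∧
    (∀ x : ℝ, genL α g x = -Dpos α g x - Dneg α g x) := by
  have hfb2 : ∀ x y : ℝ, |f x - f y| ≤ Cf + Cf := fun x y =>
    (abs_sub _ _).trans (add_le_add (hfb x) (hfb y))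
  refine ⟨?_, fun x => ?_, fun x => ?_⟩
  · intro x
    obtain ⟨hFint, hFeq⟩ := myGenSplit α f x (hfIpos x) (hfIneg x)
    obtain ⟨hGint, hGeq⟩ := myGenSplit α g x (hgIpos x) (hgIneg x)
    set X : ℝ → ℝ := fun y => (f (x + y) - f x) * (g (x + y) - g x) / |y| ^ (1 + α)
      with hX
    have e2 : EqOn (fun y => (f x - f (x + y)) * (g x - g (x + y)) / y ^ (1 + α))
        X (Ioi (0:ℝ)) := by
      intro y hy
      simp only [X, abs_of_pos (mem_Ioi.mp hy)]
      ring
    have e1 : EqOn (fun y => (f x - f (x - y)) * (g x - g (x - y)) / y ^ (1 + α))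
        (fun y => X (-y)) (Ioi (0:ℝ)) := by
      intro y hy
      simp only [X, abs_neg, abs_of_pos (mem_Ioi.mp hy), ← sub_eq_add_neg]
      ring
    have hXIneg : IntegrableOn
        (fun y => (f x - f (x + y)) * (g x - g (x + y)) / y ^ (1 + α)) (Ioi (0:ℝ)) :=
      myCrossInt α (f x) (g x) (Cf + Cf) (fun y => f (x + y)) (fun y => g (x + y))
        (fun t => hfb2 x (x + t)) (hfIneg x) (hgIneg x)
    have hXIpos : IntegrableOn
        (fun y => (f x - f (x - y)) * (g x - g (x - y)) / y ^ (1 + α)) (Ioi (0:ℝ)) :=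
      myCrossInt α (f x) (g x) (Cf + Cf) (fun y => f (x - y)) (fun y => g (x - y))
        (fun t => hfb2 x (x - t)) (hfIpos x) (hgIpos x)
    obtain ⟨hXint, hXeq⟩ := mySplit X
      (IntegrableOn.congr_fun hXIpos e1 measurableSet_Ioi)
      (IntegrableOn.congr_fun hXIneg e2 measurableSet_Ioi)
    rw [← setIntegral_congr_fun measurableSet_Ioi e1,
      ← setIntegral_congr_fun measurableSet_Ioi e2] at hXeq
    have hpt : ∀ y : ℝ, (f (x + y) * g (x + y) - f x * g x) / |y| ^ (1 + α)
        = f x * ((g (x + y) - g x) / |y| ^ (1 + α))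
          + g x * ((f (x + y) - f x) / |y| ^ (1 + α))
          + (f (x + y) - f x) * (g (x + y) - g x) / |y| ^ (1 + α) := by
      intro y; ring
    have key : ∫ y in ({0}ᶜ : Set ℝ), (f (x + y) * g (x + y) - f x * g x) / |y| ^ (1 + α)
        = f x * (∫ y in ({0}ᶜ : Set ℝ), (g (x + y) - g x) / |y| ^ (1 + α))
          + g x * (∫ y in ({0}ᶜ : Set ℝ), (f (x + y) - f x) / |y| ^ (1 + α))
          + ∫ y in ({0}ᶜ : Set ℝ), X y := by
      have hsum : IntegrableOn
          (fun y => f x * ((g (x + y) - g x) / |y| ^ (1 + α))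
            + g x * ((f (x + y) - f x) / |y| ^ (1 + α))) ({0}ᶜ : Set ℝ) :=
        (hGint.const_mul (f x)).add (hFint.const_mul (g x))
      simp only [hpt]
      rw [integral_add hsum hXint,
        integral_add (hGint.const_mul (f x)) (hFint.const_mul (g x)),
        integral_const_mul, integral_const_mul]
    simp only [genL, LambdaPos, LambdaNeg]
    rw [key, hXeq]
    ring
  · obtain ⟨_, hFeq⟩ := myGenSplit α f x (hfIpos x) (hfIneg x)
    simp only [genL, Dpos, Dneg]
    rw [hFeq]; ring
  · obtain ⟨_, hGeq⟩ := myGenSplit α g x (hgIpos x) (hgIneg x)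
    simp only [genL, Dpos, Dneg]
    rw [hGeq]; ring
end

section
/- Let α ∈ (1/2, 1) and let K(x) = |x|^{α/2} e^{−|x|^{α/2}/2} for x ∈ ℝ. Then the function J(x) = ∫_ℝ |K(x−y) − K(x)| |y|^{−1−α} dy belongs to L²(ℝ), and there is a constant c depending only on α such that ‖J‖_{L²(ℝ)} ≤ c. -/
open MeasureTheory Set

/-- The radial function `K(x) = |x|^{α/2} e^{−|x|^{α/2}/2}`. -/
noncomputable def Kfun (α : ℝ) (x : ℝ) : ℝ :=
  |x| ^ (α / 2) * Real.exp (-(1 / 2) * |x| ^ (α / 2))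

/-- `J(x) = ∫_ℝ |K(x−y) − K(x)| |y|^{−1−α} dy`. -/
noncomputable def Jfun (α : ℝ) (x : ℝ) : ℝ :=
  ∫ y : ℝ, |Kfun α (x - y) - Kfun α x| / |y| ^ (1 + α)

lemma Kfun_nonneg (α x : ℝ) : 0 ≤ Kfun α x := by
  unfold Kfun; positivity

lemma Kfun_neg (α x : ℝ) : Kfun α (-x) = Kfun α x := by
  simp [Kfun, abs_neg]

lemma Kfun_le_rpow (α x : ℝ) : Kfun α x ≤ |x| ^ (α / 2) := by
  have h1 : Real.exp (-(1 / 2) * |x| ^ (α / 2)) ≤ 1 := by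
    apply Real.exp_le_one_iff.mpr
    have : (0:ℝ) ≤ |x| ^ (α / 2) := Real.rpow_nonneg (abs_nonneg x) _
    nlinarith
  have h2 : (0:ℝ) ≤ |x| ^ (α / 2) := Real.rpow_nonneg (abs_nonneg x) _
  unfold Kfun
  nlinarith [Real.exp_pos (-(1 / 2) * |x| ^ (α / 2))]

lemma Kfun_le_two (α x : ℝ) : Kfun α x ≤ 2 := by
  set t := |x| ^ (α / 2) with ht
  have h2 : (0:ℝ) ≤ t := Real.rpow_nonneg (abs_nonneg x) _
  have h1 : (1:ℝ) + t/2 ≤ Real.exp (t/2) := by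
    have := Real.add_one_le_exp (t/2); linarith
  have h3 : Real.exp (-(1/2) * t) = (Real.exp (t/2))⁻¹ := by
    rw [← Real.exp_neg]; ring_nf
  have h4 : (0:ℝ) < Real.exp (t/2) := Real.exp_pos _
  unfold Kfun
  rw [← ht, h3]
  rw [mul_inv_le_iff₀ h4]
  nlinarith

/-- derivative of `Kfun` at positive points -/
noncomputable def Dfun (α : ℝ) (z : ℝ) : ℝ :=
  (α / 2) * z ^ (α / 2 - 1) * Real.exp (-(1 / 2) * z ^ (α / 2)) * (1 - z ^ (α / 2) / 2)

lemma Kfun_hasDerivAt (α : ℝ) {z : ℝ} (hz : 0 < z) :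
    HasDerivAt (Kfun α) (Dfun α z) z := by
  have hu : HasDerivAt (fun w : ℝ => w ^ (α / 2)) (α / 2 * z ^ (α / 2 - 1)) z :=
    Real.hasDerivAt_rpow_const (Or.inl hz.ne')
  have he : HasDerivAt (fun w : ℝ => Real.exp (-(1 / 2) * w ^ (α / 2)))
      (Real.exp (-(1 / 2) * z ^ (α / 2)) * (-(1 / 2) * (α / 2 * z ^ (α / 2 - 1)))) z :=
    (hu.const_mul (-(1 / 2))).exp
  have hK := hu.mul he
  have heq : (α / 2 * z ^ (α / 2 - 1)) * Real.exp (-(1 / 2) * z ^ (α / 2)) +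
      z ^ (α / 2) * (Real.exp (-(1 / 2) * z ^ (α / 2)) * (-(1 / 2) * (α / 2 * z ^ (α / 2 - 1))))
      = Dfun α z := by
    unfold Dfun; ring
  rw [heq] at hK
  apply hK.congr_of_eventuallyEq
  filter_upwards [eventually_gt_nhds hz] with w hw
  unfold Kfun
  rw [abs_of_pos hw]
  rfl

lemma Dfun_bound1 (α : ℝ) {z : ℝ} (hα : 0 < α) (hz : 0 < z) :
    |Dfun α z| ≤ α * z ^ (α / 2 - 1) := by
  set t := z ^ (α / 2) with htdef
  have ht : (0:ℝ) ≤ t := Real.rpow_nonneg hz.le _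
  have hb : (0:ℝ) ≤ z ^ (α / 2 - 1) := Real.rpow_nonneg hz.le _
  have hE : (0:ℝ) < Real.exp (-(1/2) * t) := Real.exp_pos _
  have key : Real.exp (-(1/2) * t) * |1 - t / 2| ≤ 1 := by
    have h1 : |1 - t/2| ≤ Real.exp (t/2) := by
      rw [abs_le]
      have := Real.add_one_le_exp (t/2)
      constructor <;> nlinarith [Real.exp_pos (t/2)]
    have h2 : Real.exp (-(1/2) * t) * Real.exp (t/2) = 1 := by
      rw [← Real.exp_add]; ring_nf; exact Real.exp_zero
    calc Real.exp (-(1/2) * t) * |1 - t / 2| ≤ Real.exp (-(1/2) * t) * Real.exp (t/2) :=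
          mul_le_mul_of_nonneg_left h1 hE.le
      _ = 1 := h2
  have : |Dfun α z| = (α / 2) * z ^ (α / 2 - 1) * (Real.exp (-(1/2) * t) * |1 - t / 2|) := by
    unfold Dfun
    rw [← htdef, abs_mul, abs_mul, abs_mul]
    rw [abs_of_nonneg (by positivity : (0:ℝ) ≤ α / 2), abs_of_nonneg hb,
      abs_of_nonneg hE.le]
    ring
  rw [this]
  calc (α / 2) * z ^ (α / 2 - 1) * (Real.exp (-(1/2) * t) * |1 - t / 2|)
      ≤ (α / 2) * z ^ (α / 2 - 1) * 1 := by
        apply mul_le_mul_of_nonneg_left key (by positivity)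
    _ ≤ α * z ^ (α / 2 - 1) := by nlinarith

lemma Dfun_bound2 {α z : ℝ} (hα : α ∈ Ioo (1/2 : ℝ) 1) (hz : (1/2 : ℝ) ≤ z) :
    |Dfun α z| ≤ 131072 * α * z ^ (α / 2 - 2) := by
  obtain ⟨hα1, hα2⟩ := hα
  have hzpos : (0:ℝ) < z := lt_of_lt_of_le (by norm_num) hz
  set β := α / 2 with hβ
  have hβ1 : (1:ℝ)/4 < β := by rw [hβ]; linarith
  have hβ2 : β < 1/2 := by rw [hβ]; linarith
  set t := z ^ β with htdef
  have ht : (0:ℝ) < t := Real.rpow_pos_of_pos hzpos _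
  -- exp (t/4) ≥ (t/16)^4
  have hexp4 : (t/16)^(4:ℕ) ≤ Real.exp (t/4) := by
    have h0 : Real.exp (t/4) = Real.exp (t/16) ^ (4:ℕ) := by
      rw [← Real.exp_nat_mul]; congr 1; push_cast; ring
    rw [h0]
    apply pow_le_pow_left₀ (by positivity)
    have := Real.add_one_le_exp (t/16); linarith
  -- key : exp(-(1/2)t) * |1 - t/2| ≤ 131072 * (z ^ (4*β))⁻¹
  have hz4 : z ^ ((4:ℝ)*β) = t^(4:ℕ) := by
    rw [htdef, ← Real.rpow_natCast (z ^ β) 4, ← Real.rpow_mul hzpos.le]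
    norm_num [mul_comm]
  have key : Real.exp (-(1/2) * t) * |1 - t / 2| ≤ 131072 * (z ^ ((4:ℝ)*β))⁻¹ := by
    rw [hz4]
    have h1 : |1 - t/2| ≤ 2 * Real.exp (t/4) := by
      rw [abs_le]
      have := Real.add_one_le_exp (t/4)
      constructor <;> nlinarith [Real.exp_pos (t/4)]
    have h2 : Real.exp (-(1/2) * t) * Real.exp (t/4) = Real.exp (-(t/4)) := by
      rw [← Real.exp_add]; ring_nf
    have h3 : Real.exp (-(t/4)) ≤ 65536 * (t^(4:ℕ))⁻¹ := by
      rw [Real.exp_neg, inv_le_comm₀ (Real.exp_pos _) (by positivity)]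
      have h5 : (65536 * (t^(4:ℕ))⁻¹)⁻¹ = (t/16)^(4:ℕ) := by
        field_simp; ring
      rw [h5]; exact hexp4
    calc Real.exp (-(1/2) * t) * |1 - t / 2|
        ≤ Real.exp (-(1/2) * t) * (2 * Real.exp (t/4)) :=
          mul_le_mul_of_nonneg_left h1 (Real.exp_pos _).le
      _ = 2 * Real.exp (-(t/4)) := by rw [← h2]; ring
      _ ≤ 2 * (65536 * (t^(4:ℕ))⁻¹) := by nlinarith [h3]
      _ = 131072 * (t^(4:ℕ))⁻¹ := by ring
  -- assemble
  have hb : (0:ℝ) ≤ z ^ (β - 1) := Real.rpow_nonneg hzpos.le _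
  have heq : |Dfun α z| = (α / 2) * z ^ (β - 1) * (Real.exp (-(1/2) * t) * |1 - t / 2|) := by
    unfold Dfun
    rw [← hβ, ← htdef, abs_mul, abs_mul, abs_mul]
    rw [abs_of_nonneg (by positivity : (0:ℝ) ≤ α / 2), abs_of_nonneg hb,
      abs_of_nonneg (Real.exp_pos _).le]
    ring
  have step1 : |Dfun α z| ≤ (α / 2) * z ^ (β - 1) * (131072 * (z ^ ((4:ℝ)*β))⁻¹) := by
    rw [heq]
    apply mul_le_mul_of_nonneg_left key (by positivity)
  have step2 : (α / 2) * z ^ (β - 1) * (131072 * (z ^ ((4:ℝ)*β))⁻¹)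
      = 65536 * α * z ^ (β - 1 - 4*β) := by
    rw [← Real.rpow_neg hzpos.le]
    have hmul : z ^ (β - 1) * z ^ (-(4*β)) = z ^ (β - 1 - 4*β) := by
      rw [← Real.rpow_add hzpos]; ring_nf
    calc α / 2 * z ^ (β - 1) * (131072 * z ^ (-(4 * β)))
        = 65536 * α * (z ^ (β - 1) * z ^ (-(4*β))) := by ring
      _ = 65536 * α * z ^ (β - 1 - 4*β) := by rw [hmul]
  have step3 : z ^ (β - 1 - 4*β) ≤ 2 * z ^ (β - 2) := by
    have hsplit : z ^ (β - 1 - 4*β) = z ^ (β - 2) * z ^ (1 - 4*β) := by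
      rw [← Real.rpow_add hzpos]; ring_nf
    have h14 : z ^ (1 - 4*β) ≤ 2 := by
      have ha : z ^ (1 - 4*β) ≤ ((1:ℝ)/2) ^ (1 - 4*β) :=
        Real.rpow_le_rpow_of_nonpos (by norm_num) hz (by linarith)
      have hb2 : ((1:ℝ)/2) ^ (1 - 4*β) = (2:ℝ) ^ (4*β - 1) := by
        rw [one_div, Real.inv_rpow (by norm_num), ← Real.rpow_neg (by norm_num)]
        congr 1; ring
      have hc : (2:ℝ) ^ (4*β - 1) ≤ (2:ℝ) ^ (1:ℝ) :=
        Real.rpow_le_rpow_of_exponent_le one_le_two (by linarith)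
      rw [hb2] at ha
      calc z ^ (1 - 4*β) ≤ (2:ℝ) ^ (4*β-1) := ha
        _ ≤ (2:ℝ) ^ (1:ℝ) := hc
        _ = 2 := Real.rpow_one 2
    calc z ^ (β - 1 - 4*β) = z ^ (β - 2) * z ^ (1 - 4*β) := hsplit
      _ ≤ z ^ (β - 2) * 2 := mul_le_mul_of_nonneg_left h14 (Real.rpow_nonneg hzpos.le _)
      _ = 2 * z ^ (β - 2) := by ring
  calc |Dfun α z| ≤ 65536 * α * z ^ (β - 1 - 4*β) := by rw [← step2]; exact step1
    _ ≤ 65536 * α * (2 * z ^ (β - 2)) := by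
        apply mul_le_mul_of_nonneg_left step3 (by positivity)
    _ = 131072 * α * z ^ (β - 2) := by ring

lemma Kfun_lip_pos (α : ℝ) {x M y : ℝ} (hx : 0 < x)
    (hM : ∀ z : ℝ, x/2 ≤ z → |Dfun α z| ≤ M) (hy : |y| ≤ x/2) :
    |Kfun α (x - y) - Kfun α x| ≤ M * |y| := by
  have habs := abs_le.1 hy
  have key : ∀ w ∈ Ici (x/2), HasDerivWithinAt (Kfun α) (Dfun α w) (Ici (x/2)) w := by
    intro w hw
    exact (Kfun_hasDerivAt α (lt_of_lt_of_le (by linarith) hw)).hasDerivWithinAt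
  have bound : ∀ w ∈ Ici (x/2), ‖Dfun α w‖ ≤ M := fun w hw => hM w hw
  have hx1 : x ∈ Ici (x/2) := by simp [mem_Ici]; linarith
  have hx2 : x - y ∈ Ici (x/2) := by simp [mem_Ici]; linarith
  have := (convex_Ici (x/2)).norm_image_sub_le_of_norm_hasDerivWithin_le key bound hx2 hx1
  simpa [abs_sub_comm] using this

lemma Kfun_lip (α : ℝ) {x M y : ℝ} (hx : x ≠ 0)
    (hM : ∀ z : ℝ, |x|/2 ≤ z → |Dfun α z| ≤ M) (hy : |y| ≤ |x|/2) :
    |Kfun α (x - y) - Kfun α x| ≤ M * |y| := by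
  rcases lt_or_gt_of_ne hx with hneg | hpos
  · have h1 : |x| = -x := abs_of_neg hneg
    have := Kfun_lip_pos α (x := -x) (y := -y) (M := M) (by linarith)
      (by intro z hz; apply hM; rw [h1]; exact hz)
      (by rw [abs_neg]; rw [h1] at hy; exact hy)
    rw [show -x - -y = -(x - y) by ring, Kfun_neg, Kfun_neg, abs_neg] at this
    exact this
  · have h1 : |x| = x := abs_of_pos hpos
    exact Kfun_lip_pos α hpos (fun z hz => hM z (by rw [h1]; exact hz))
      (by rw [h1] at hy; exact hy)

lemma integrable_comp_abs' {f : ℝ → ℝ}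
    (hf : IntegrableOn (fun x => f |x|) (Ioi (0:ℝ))) :
    Integrable (fun x => f |x|) := by
  have int_Iic : IntegrableOn (fun x ↦ f |x|) (Iic 0) := by
    rw [← Measure.map_neg_eq_self (volume : Measure ℝ)]
    have m : MeasurableEmbedding fun x : ℝ => -x := (Homeomorph.neg ℝ).measurableEmbedding
    rw [m.integrableOn_map_iff]
    simp_rw [Function.comp_def, abs_neg, neg_preimage, neg_Iic, neg_zero]
    exact Iff.mpr integrableOn_Ici_iff_integrableOn_Ioi hf
  have h := int_Iic.union hf
  rwa [Iic_union_Ioi, integrableOn_univ] at h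

lemma integrableA {p r : ℝ} (hp : -1 < p) (hr : 0 < r) :
    Integrable (fun y : ℝ => (Ioc 0 r).indicator (fun t => t ^ p) |y|) := by
  have base : IntegrableOn (fun t : ℝ => t ^ p) (Ioc 0 r) := by
    have h := intervalIntegral.intervalIntegrable_rpow' (a := 0) (b := r) hp
    rwa [intervalIntegrable_iff, uIoc_of_le hr.le] at h
  have ind_int : Integrable ((Ioc 0 r).indicator (fun t : ℝ => t ^ p)) :=
    base.integrable_indicator measurableSet_Ioc
  apply integrable_comp_abs'
  exact (ind_int.integrableOn).congr_fun
    (fun x hx => by rw [abs_of_pos hx]) measurableSet_Ioi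

lemma integralA {p r : ℝ} (hp : -1 < p) (hr : 0 < r) :
    ∫ y : ℝ, (Ioc 0 r).indicator (fun t => t ^ p) |y| = 2 * (r ^ (p+1) / (p+1)) := by
  rw [integral_comp_abs]
  rw [integral_indicator measurableSet_Ioc]
  rw [Measure.restrict_restrict measurableSet_Ioc,
    inter_eq_self_of_subset_left Ioc_subset_Ioi_self]
  rw [← intervalIntegral.integral_of_le hr.le]
  rw [integral_rpow (Or.inl hp)]
  rw [Real.zero_rpow (by linarith : p + 1 ≠ 0)]
  ring

lemma integrableB {p r : ℝ} (hp : p < -1) (hr : 0 < r) :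
    Integrable (fun y : ℝ => (Ioi r).indicator (fun t => t ^ p) |y|) := by
  have base : IntegrableOn (fun t : ℝ => t ^ p) (Ioi r) :=
    integrableOn_Ioi_rpow_of_lt hp hr
  have ind_int : Integrable ((Ioi r).indicator (fun t : ℝ => t ^ p)) :=
    base.integrable_indicator measurableSet_Ioi
  apply integrable_comp_abs'
  exact (ind_int.integrableOn).congr_fun
    (fun x hx => by rw [abs_of_pos hx]) measurableSet_Ioi

lemma integralB {p r : ℝ} (hp : p < -1) (hr : 0 < r) :
    ∫ y : ℝ, (Ioi r).indicator (fun t => t ^ p) |y| = 2 * (-r ^ (p+1) / (p+1)) := by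
  rw [integral_comp_abs]
  rw [integral_indicator measurableSet_Ioi]
  rw [Measure.restrict_restrict measurableSet_Ioi,
    inter_eq_self_of_subset_left (Ioi_subset_Ioi hr.le)]
  rw [integral_Ioi_rpow_of_lt hp hr]

lemma rpow_half_le {t c : ℝ} (ht : 0 < t) (hc : 0 ≤ c) (hc1 : c ≤ 1) :
    (t/2) ^ (-c) ≤ 2 * t ^ (-c) := by
  rw [Real.div_rpow ht.le (by norm_num)]
  rw [Real.rpow_neg (by norm_num : (0:ℝ) ≤ 2), div_eq_mul_inv, inv_inv]
  have h2 : (2:ℝ) ^ c ≤ 2 := by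
    calc (2:ℝ) ^ c ≤ (2:ℝ) ^ (1:ℝ) := Real.rpow_le_rpow_of_exponent_le one_le_two hc1
      _ = 2 := Real.rpow_one 2
  calc t ^ (-c) * 2 ^ c ≤ t ^ (-c) * 2 :=
        mul_le_mul_of_nonneg_left h2 (Real.rpow_nonneg ht.le _)
    _ = 2 * t ^ (-c) := by ring

lemma rpow_le_two_mul {r a b : ℝ} (hr : (1/2:ℝ) ≤ r) (hab : a ≤ b) (hba : b - a ≤ 1) :
    r ^ a ≤ 2 * r ^ b := by
  have hrpos : (0:ℝ) < r := lt_of_lt_of_le (by norm_num) hr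
  have hsplit : r ^ a = r ^ b * r ^ (a - b) := by
    rw [← Real.rpow_add hrpos]; ring_nf
  have h1 : r ^ (a - b) ≤ ((1:ℝ)/2) ^ (a - b) :=
    Real.rpow_le_rpow_of_nonpos (by norm_num) hr (by linarith)
  have h2 : ((1:ℝ)/2) ^ (a - b) = (2:ℝ) ^ (b - a) := by
    rw [one_div, Real.inv_rpow (by norm_num), ← Real.rpow_neg (by norm_num)]
    congr 1; ring
  have h3 : (2:ℝ) ^ (b - a) ≤ 2 := by
    calc (2:ℝ) ^ (b-a) ≤ (2:ℝ) ^ (1:ℝ) := Real.rpow_le_rpow_of_exponent_le one_le_two hba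
      _ = 2 := Real.rpow_one 2
  calc r ^ a = r ^ b * r ^ (a - b) := hsplit
    _ ≤ r ^ b * 2 := by
        apply mul_le_mul_of_nonneg_left _ (Real.rpow_nonneg hrpos.le _)
        rw [hsplit] at *; rw [h2] at h1; linarith
    _ = 2 * r ^ b := by ring

lemma J_bound_large {α x : ℝ} (hα : α ∈ Ioo (1/2:ℝ) 1) (hx : 1 ≤ |x|) :
    Jfun α x ≤ (1048576*α/(1-α) + 16/α) * |x| ^ (-α) := by
  obtain ⟨hα1, hα2⟩ := hα
  have hα0 : (0:ℝ) < α := by linarith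
  have hxne : x ≠ 0 := by intro h; rw [h] at hx; simp at hx; linarith
  set r : ℝ := |x|/2 with hrdef
  have hr : 0 < r := by have := abs_pos.2 hxne; rw [hrdef]; linarith
  have hr2 : (1/2:ℝ) ≤ r := by rw [hrdef]; linarith
  set M : ℝ := 131072 * α * r ^ (α/2 - 2) with hMdef
  have hM : ∀ z : ℝ, r ≤ z → |Dfun α z| ≤ M := by
    intro z hz
    have hz2 : (1/2:ℝ) ≤ z := le_trans hr2 hz
    calc |Dfun α z| ≤ 131072 * α * z ^ (α/2-2) := Dfun_bound2 ⟨hα1, hα2⟩ hz2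
      _ ≤ M := by
          rw [hMdef]
          apply mul_le_mul_of_nonneg_left _ (by positivity)
          exact Real.rpow_le_rpow_of_nonpos hr hz (by linarith)
  set g : ℝ → ℝ := fun y => M * (Ioc 0 r).indicator (fun t => t ^ (-α)) |y|
      + 4 * (Ioi r).indicator (fun t => t ^ (-(1+α))) |y| with hgdef
  have hgint : Integrable g :=
    ((integrableA (by linarith) hr).const_mul M).add
      ((integrableB (by linarith) hr).const_mul 4)
  have hfg : ∀ y : ℝ, |Kfun α (x - y) - Kfun α x| / |y| ^ (1+α) ≤ g y := by
    intro y
    rcases eq_or_ne y 0 with h0 | hyne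
    · subst h0
      have hz : |(0:ℝ)| ^ (1+α) = 0 := by
        rw [abs_zero, Real.zero_rpow (by linarith)]
      rw [hgdef]
      simp only [hz, div_zero, abs_zero]
      rw [indicator_of_notMem (by simp : (0:ℝ) ∉ Ioc 0 r),
        indicator_of_notMem (by simp [hr.le] : (0:ℝ) ∉ Ioi r)]
      norm_num
    · have hyabs : 0 < |y| := abs_pos.2 hyne
      have hden : 0 < |y| ^ (1+α) := Real.rpow_pos_of_pos hyabs _
      rcases le_or_gt |y| r with hcase | hcase
      · have mem1 : |y| ∈ Ioc 0 r := ⟨hyabs, hcase⟩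
        have notmem2 : |y| ∉ Ioi r := by simp [mem_Ioi]; exact hcase
        rw [hgdef]
        simp only [indicator_of_mem mem1, indicator_of_notMem notmem2, mul_zero, add_zero]
        have hnum : |Kfun α (x - y) - Kfun α x| ≤ M * |y| :=
          Kfun_lip α hxne (fun z hz => hM z (by rwa [← hrdef] at hz)) (by rwa [← hrdef])
        have hMnn : 0 ≤ M := by positivity
        calc |Kfun α (x - y) - Kfun α x| / |y| ^ (1+α) ≤ (M * |y|) / |y| ^ (1+α) := by
              gcongr
          _ = M * (|y| ^ ((1:ℝ)) / |y| ^ (1+α)) := by rw [Real.rpow_one]; ring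
          _ = M * |y| ^ (-α) := by rw [← Real.rpow_sub hyabs]; ring_nf
      · have mem2 : |y| ∈ Ioi r := hcase
        have notmem1 : |y| ∉ Ioc 0 r := by
          intro hmem; exact absurd hmem.2 (not_le.2 hcase)
        rw [hgdef]
        simp only [indicator_of_mem mem2, indicator_of_notMem notmem1, mul_zero, zero_add]
        have hnum : |Kfun α (x - y) - Kfun α x| ≤ 4 := by
          rw [abs_le]
          have h1 := Kfun_nonneg α (x - y); have h2 := Kfun_nonneg α x
          have h3 := Kfun_le_two α (x - y); have h4 := Kfun_le_two α x
          constructor <;> nlinarith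
        calc |Kfun α (x - y) - Kfun α x| / |y| ^ (1+α) ≤ 4 / |y| ^ (1+α) := by gcongr
          _ = 4 * |y| ^ (-(1+α)) := by
              rw [Real.rpow_neg (abs_nonneg y), div_eq_mul_inv]
  have hJle : Jfun α x ≤ ∫ y, g y := by
    apply integral_mono_of_nonneg (Filter.Eventually.of_forall (fun y => by positivity)) hgint
      (Filter.Eventually.of_forall hfg)
  have hint : ∫ y, g y = M * (2 * (r ^ (-α+1) / (-α+1))) + 4 * (2 * (-r ^ (-(1+α)+1) / (-(1+α)+1))) := by
    rw [hgdef]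
    rw [integral_add ((integrableA (by linarith) hr).const_mul M)
      ((integrableB (by linarith) hr).const_mul 4)]
    rw [integral_const_mul, integral_const_mul, integralA (by linarith) hr,
      integralB (by linarith) hr]
  have harith : M * (2 * (r ^ (-α+1) / (-α+1))) + 4 * (2 * (-r ^ (-(1+α)+1) / (-(1+α)+1)))
      ≤ (524288*α/(1-α) + 8/α) * r ^ (-α) := by
    have e1 : r ^ (α/2-2) * r ^ (-α+1) = r ^ (α/2 - 1 - α) := by
      rw [← Real.rpow_add hr]; ring_nf
    have e2 : (-(1+α)+1 : ℝ) = -α := by ring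
    have e3 : r ^ (α/2 - 1 - α) ≤ 2 * r ^ (-α) :=
      rpow_le_two_mul hr2 (by linarith) (by linarith)
    rw [e2]
    have lhs_eq : M * (2 * (r ^ (-α+1) / (-α+1))) = (262144*α/(1-α)) * r ^ (α/2-1-α) := by
      rw [hMdef, ← e1]
      have hne : (1:ℝ) - α ≠ 0 := by linarith
      have hne' : -α + (1:ℝ) ≠ 0 := by linarith
      field_simp
      ring
    rw [lhs_eq]
    have t2 : 4 * (2 * (-r ^ (-α) / (-α))) = (8/α) * r ^ (-α) := by
      field_simp; ring
    rw [t2]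
    have hrnn : 0 ≤ r ^ (-α) := Real.rpow_nonneg hr.le _
    have hc : (0:ℝ) ≤ 262144*α/(1-α) := div_nonneg (by positivity) (by linarith)
    calc (262144*α/(1-α)) * r ^ (α/2-1-α) + (8/α) * r ^ (-α)
        ≤ (262144*α/(1-α)) * (2 * r ^ (-α)) + (8/α) * r ^ (-α) :=
          add_le_add_left (mul_le_mul_of_nonneg_left e3 hc) _
      _ = (524288*α/(1-α) + 8/α) * r ^ (-α) := by ring
  have hfinal : (524288*α/(1-α) + 8/α) * r ^ (-α)
      ≤ (1048576*α/(1-α) + 16/α) * |x| ^ (-α) := by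
    have h1 : r ^ (-α) ≤ 2 * |x| ^ (-α) := by
      rw [hrdef]
      exact rpow_half_le (abs_pos.2 hxne) hα0.le hα2.le
    have hc : (0:ℝ) ≤ 524288*α/(1-α) + 8/α := add_nonneg (div_nonneg (by positivity) (by linarith)) (by positivity)
    calc (524288*α/(1-α) + 8/α) * r ^ (-α) ≤ (524288*α/(1-α) + 8/α) * (2 * |x| ^ (-α)) :=
          mul_le_mul_of_nonneg_left h1 hc
      _ = (1048576*α/(1-α) + 16/α) * |x| ^ (-α) := by ring
  linarith [hJle, hint ▸ hJle]

lemma J_bound_small {α x : ℝ} (hα : α ∈ Ioo (1/2:ℝ) 1) (hx0 : x ≠ 0) (hx : |x| ≤ 1) :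
    Jfun α x ≤ (4*α/(1-α) + 32/α) * |x| ^ (-(α/2)) := by
  obtain ⟨hα1, hα2⟩ := hα
  have hα0 : (0:ℝ) < α := by linarith
  have hxabs : 0 < |x| := abs_pos.2 hx0
  set r : ℝ := |x|/2 with hrdef
  have hr : 0 < r := by rw [hrdef]; linarith
  set M : ℝ := α * r ^ (α/2 - 1) with hMdef
  have hM : ∀ z : ℝ, r ≤ z → |Dfun α z| ≤ M := by
    intro z hz
    have hzpos : 0 < z := lt_of_lt_of_le hr hz
    calc |Dfun α z| ≤ α * z ^ (α/2-1) := Dfun_bound1 α hα0 hzpos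
      _ ≤ M := by
          rw [hMdef]
          apply mul_le_mul_of_nonneg_left _ hα0.le
          exact Real.rpow_le_rpow_of_nonpos hr hz (by linarith)
  set g : ℝ → ℝ := fun y => M * (Ioc 0 r).indicator (fun t => t ^ (-α)) |y|
      + (3 * (Ioi r).indicator (fun t => t ^ (α/2 - (1+α))) |y|
        + |x| ^ (α/2) * (Ioi r).indicator (fun t => t ^ (-(1+α))) |y|) with hgdef
  have hp2 : (α/2 - (1+α) : ℝ) < -1 := by linarith
  have hgint : Integrable g :=
    ((integrableA (by linarith) hr).const_mul M).add
      (((integrableB hp2 hr).const_mul 3).add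
        ((integrableB (by linarith) hr).const_mul (|x| ^ (α/2))))
  have hfg : ∀ y : ℝ, |Kfun α (x - y) - Kfun α x| / |y| ^ (1+α) ≤ g y := by
    intro y
    rcases eq_or_ne y 0 with h0 | hyne
    · subst h0
      have hz : |(0:ℝ)| ^ (1+α) = 0 := by
        rw [abs_zero, Real.zero_rpow (by linarith)]
      have i1 : (Ioc (0:ℝ) r).indicator (fun t => t ^ (-α)) 0 = 0 :=
        indicator_of_notMem (by simp) _
      have i2 : ∀ p : ℝ, (Ioi r).indicator (fun t => t ^ p) (0:ℝ) = 0 := fun p =>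
        indicator_of_notMem (by simp [hr.le]) _
      rw [hgdef]
      simp only [hz, div_zero, abs_zero, i1, i2]
      norm_num
    · have hyabs : 0 < |y| := abs_pos.2 hyne
      have hden : 0 < |y| ^ (1+α) := Real.rpow_pos_of_pos hyabs _
      rcases le_or_gt |y| r with hcase | hcase
      · have mem1 : |y| ∈ Ioc 0 r := ⟨hyabs, hcase⟩
        have notmem2 : |y| ∉ Ioi r := by simp [mem_Ioi]; exact hcase
        rw [hgdef]
        simp only [indicator_of_mem mem1, indicator_of_notMem notmem2, mul_zero,
          add_zero, zero_add]
        have hnum : |Kfun α (x - y) - Kfun α x| ≤ M * |y| :=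
          Kfun_lip α hx0 (fun z hz => hM z (by rwa [← hrdef] at hz)) (by rwa [← hrdef])
        have hMnn : 0 ≤ M := by positivity
        calc |Kfun α (x - y) - Kfun α x| / |y| ^ (1+α) ≤ (M * |y|) / |y| ^ (1+α) := by
              gcongr
          _ = M * (|y| ^ ((1:ℝ)) / |y| ^ (1+α)) := by rw [Real.rpow_one]; ring
          _ = M * |y| ^ (-α) := by rw [← Real.rpow_sub hyabs]; ring_nf
      · have mem2 : |y| ∈ Ioi r := hcase
        have notmem1 : |y| ∉ Ioc 0 r := by
          intro hmem; exact absurd hmem.2 (not_le.2 hcase)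
        rw [hgdef]
        simp only [indicator_of_mem mem2, indicator_of_notMem notmem1, mul_zero, zero_add]
        have hxy : |x - y| ≤ 3 * |y| := by
          have h1 : |x - y| ≤ |x| + |y| := abs_sub _ _
          have h2 : |x| = 2 * r := by rw [hrdef]; ring
          rw [h2] at h1; linarith
        have hK1 : Kfun α (x - y) ≤ 3 * |y| ^ (α/2) := by
          calc Kfun α (x - y) ≤ |x - y| ^ (α/2) := Kfun_le_rpow α (x - y)
            _ ≤ (3 * |y|) ^ (α/2) :=
                Real.rpow_le_rpow (abs_nonneg _) hxy (by linarith)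
            _ = (3:ℝ) ^ (α/2) * |y| ^ (α/2) :=
                Real.mul_rpow (by norm_num) (abs_nonneg y)
            _ ≤ 3 * |y| ^ (α/2) := by
                apply mul_le_mul_of_nonneg_right _ (Real.rpow_nonneg (abs_nonneg y) _)
                calc (3:ℝ) ^ (α/2) ≤ (3:ℝ) ^ (1:ℝ) :=
                      Real.rpow_le_rpow_of_exponent_le (by norm_num) (by linarith)
                  _ = 3 := Real.rpow_one 3
        have hK2 : Kfun α x ≤ |x| ^ (α/2) := Kfun_le_rpow α x
        have hnum : |Kfun α (x - y) - Kfun α x| ≤ 3 * |y| ^ (α/2) + |x| ^ (α/2) := by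
          rw [abs_le]
          have h1 := Kfun_nonneg α (x - y); have h2 := Kfun_nonneg α x
          have h3 : (0:ℝ) ≤ |y| ^ (α/2) := Real.rpow_nonneg (abs_nonneg y) _
          have h4 : (0:ℝ) ≤ |x| ^ (α/2) := Real.rpow_nonneg (abs_nonneg x) _
          constructor <;> nlinarith
        calc |Kfun α (x - y) - Kfun α x| / |y| ^ (1+α)
            ≤ (3 * |y| ^ (α/2) + |x| ^ (α/2)) / |y| ^ (1+α) := by gcongr
          _ = 3 * (|y| ^ (α/2) / |y| ^ (1+α)) + |x| ^ (α/2) * (|y| ^ (1+α))⁻¹ := by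
              rw [add_div]; ring
          _ = 3 * |y| ^ (α/2 - (1+α)) + |x| ^ (α/2) * |y| ^ (-(1+α)) := by
              rw [← Real.rpow_sub hyabs, Real.rpow_neg (abs_nonneg y)]
  have hJle : Jfun α x ≤ ∫ y, g y := by
    apply integral_mono_of_nonneg (Filter.Eventually.of_forall (fun y => by positivity)) hgint
      (Filter.Eventually.of_forall hfg)
  have hint : ∫ y, g y = M * (2 * (r ^ (-α+1) / (-α+1)))
      + (3 * (2 * (-r ^ ((α/2 - (1+α))+1) / ((α/2 - (1+α))+1)))
        + |x| ^ (α/2) * (2 * (-r ^ (-(1+α)+1) / (-(1+α)+1)))) := by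
    rw [hgdef]
    have i1 : Integrable (fun y : ℝ => M * (Ioc 0 r).indicator (fun t => t ^ (-α)) |y|) :=
      (integrableA (by linarith) hr).const_mul M
    have i2 : Integrable (fun y : ℝ => 3 * (Ioi r).indicator (fun t => t ^ (α/2 - (1+α))) |y|) :=
      (integrableB hp2 hr).const_mul 3
    have i3 : Integrable (fun y : ℝ =>
        |x| ^ (α/2) * (Ioi r).indicator (fun t => t ^ (-(1+α))) |y|) :=
      (integrableB (by linarith) hr).const_mul (|x| ^ (α/2))
    have i23 : Integrable (fun y : ℝ =>
        3 * (Ioi r).indicator (fun t => t ^ (α/2 - (1+α))) |y|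
          + |x| ^ (α/2) * (Ioi r).indicator (fun t => t ^ (-(1+α))) |y|) := i2.add i3
    rw [integral_add i1 i23, integral_add i2 i3]
    rw [integral_const_mul, integral_const_mul, integral_const_mul,
      integralA (by linarith) hr, integralB hp2 hr, integralB (by linarith) hr]
  have harith : M * (2 * (r ^ (-α+1) / (-α+1)))
      + (3 * (2 * (-r ^ ((α/2 - (1+α))+1) / ((α/2 - (1+α))+1)))
        + |x| ^ (α/2) * (2 * (-r ^ (-(1+α)+1) / (-(1+α)+1))))
      ≤ (2*α/(1-α) + 16/α) * r ^ (-(α/2)) := by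
    have e1 : r ^ (α/2-1) * r ^ (-α+1) = r ^ (-(α/2)) := by
      rw [← Real.rpow_add hr]; ring_nf
    have e2 : ((α/2 - (1+α))+1 : ℝ) = -(α/2) := by ring
    have e3 : (-(1+α)+1 : ℝ) = -α := by ring
    rw [e2, e3]
    have t1 : M * (2 * (r ^ (-α+1) / (-α+1))) = (2*α/(1-α)) * r ^ (-(α/2)) := by
      rw [hMdef, ← e1]
      have hne : (1:ℝ) - α ≠ 0 := by linarith
      have hne' : -α + (1:ℝ) ≠ 0 := by linarith
      field_simp
      ring
    have t2 : 3 * (2 * (-r ^ (-(α/2)) / (-(α/2)))) = (12/α) * r ^ (-(α/2)) := by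
      field_simp; ring
    have t3 : |x| ^ (α/2) * (2 * (-r ^ (-α) / (-α))) ≤ (4/α) * r ^ (-(α/2)) := by
      have hx2r : |x| ^ (α/2) ≤ 2 * r ^ (α/2) := by
        have hxx : |x| = 2 * r := by rw [hrdef]; ring
        rw [hxx, Real.mul_rpow (by norm_num) hr.le]
        apply mul_le_mul_of_nonneg_right _ (Real.rpow_nonneg hr.le _)
        calc (2:ℝ) ^ (α/2) ≤ (2:ℝ) ^ (1:ℝ) :=
              Real.rpow_le_rpow_of_exponent_le one_le_two (by linarith)
          _ = 2 := Real.rpow_one 2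
      have e4 : r ^ (α/2) * r ^ (-α) = r ^ (-(α/2)) := by
        rw [← Real.rpow_add hr]; ring_nf
      have hra : (0:ℝ) ≤ r ^ (-α) := Real.rpow_nonneg hr.le _
      calc |x| ^ (α/2) * (2 * (-r ^ (-α) / (-α)))
          = |x| ^ (α/2) * ((2/α) * r ^ (-α)) := by field_simp
        _ ≤ (2 * r ^ (α/2)) * ((2/α) * r ^ (-α)) := by
            apply mul_le_mul_of_nonneg_right hx2r (by positivity)
        _ = (4/α) * (r ^ (α/2) * r ^ (-α)) := by ring
        _ = (4/α) * r ^ (-(α/2)) := by rw [e4]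
    rw [t1, t2]
    have : (2*α/(1-α)) * r ^ (-(α/2)) + ((12/α) * r ^ (-(α/2)) + (4/α) * r ^ (-(α/2)))
        = (2*α/(1-α) + 16/α) * r ^ (-(α/2)) := by ring
    linarith [t3]
  have hfinal : (2*α/(1-α) + 16/α) * r ^ (-(α/2))
      ≤ (4*α/(1-α) + 32/α) * |x| ^ (-(α/2)) := by
    have h1 : r ^ (-(α/2)) ≤ 2 * |x| ^ (-(α/2)) := by
      rw [hrdef]
      exact rpow_half_le hxabs (by linarith) (by linarith)
    have hc : (0:ℝ) ≤ 2*α/(1-α) + 16/α :=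
      add_nonneg (div_nonneg (by positivity) (by linarith)) (by positivity)
    calc (2*α/(1-α) + 16/α) * r ^ (-(α/2)) ≤ (2*α/(1-α) + 16/α) * (2 * |x| ^ (-(α/2))) :=
          mul_le_mul_of_nonneg_left h1 hc
      _ = (4*α/(1-α) + 32/α) * |x| ^ (-(α/2)) := by ring
  linarith [hJle, hint ▸ hJle]

noncomputable def PhiC (α : ℝ) : ℝ := (4*α/(1-α) + 32/α) + (1048576*α/(1-α) + 16/α)

noncomputable def Phi (α : ℝ) (x : ℝ) : ℝ :=
  PhiC α * ((Ioc (0:ℝ) 1).indicator (fun t => t ^ (-(α/2))) |x|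
    + (Ioi (1:ℝ)).indicator (fun t => t ^ (-α)) |x|)

lemma PhiC_nonneg {α : ℝ} (hα : α ∈ Ioo (1/2:ℝ) 1) : 0 ≤ PhiC α := by
  obtain ⟨h1, h2⟩ := hα
  unfold PhiC
  have a1 : (0:ℝ) ≤ 4*α/(1-α) := div_nonneg (by linarith) (by linarith)
  have a2 : (0:ℝ) ≤ 1048576*α/(1-α) := div_nonneg (by linarith) (by linarith)
  have a3 : (0:ℝ) ≤ 32/α := by positivity
  have a4 : (0:ℝ) ≤ 16/α := by positivity
  linarith

lemma Phi_nonneg {α : ℝ} (hα : α ∈ Ioo (1/2:ℝ) 1) (x : ℝ) : 0 ≤ Phi α x := by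
  unfold Phi
  apply mul_nonneg (PhiC_nonneg hα)
  apply add_nonneg
  · exact indicator_nonneg (fun t ht => Real.rpow_nonneg ht.1.le _) _
  · exact indicator_nonneg (fun t ht => Real.rpow_nonneg
      (by linarith [mem_Ioi.1 ht] : (0:ℝ) ≤ t) _) _

lemma Jfun_nonneg (α x : ℝ) : 0 ≤ Jfun α x :=
  integral_nonneg (fun y => by positivity)

lemma J_le_Phi {α x : ℝ} (hα : α ∈ Ioo (1/2:ℝ) 1) (hx0 : x ≠ 0) :
    Jfun α x ≤ Phi α x := by
  have hxabs : 0 < |x| := abs_pos.2 hx0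
  obtain ⟨h1, h2⟩ := hα
  unfold Phi
  rcases le_or_gt |x| 1 with hc | hc
  · have mem1 : |x| ∈ Ioc (0:ℝ) 1 := ⟨hxabs, hc⟩
    have notmem2 : |x| ∉ Ioi (1:ℝ) := by simp [mem_Ioi]; exact hc
    rw [indicator_of_mem mem1, indicator_of_notMem notmem2, add_zero]
    have hb := J_bound_small ⟨h1, h2⟩ hx0 hc
    have hr : (0:ℝ) ≤ |x| ^ (-(α/2)) := Real.rpow_nonneg (abs_nonneg x) _
    have hC : (4*α/(1-α) + 32/α) ≤ PhiC α := by
      unfold PhiC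
      linarith [div_nonneg (by linarith : (0:ℝ) ≤ 1048576*α) (by linarith : (0:ℝ) ≤ 1-α),
        (by positivity : (0:ℝ) ≤ 16/α)]
    calc Jfun α x ≤ (4*α/(1-α) + 32/α) * |x| ^ (-(α/2)) := hb
      _ ≤ PhiC α * |x| ^ (-(α/2)) := mul_le_mul_of_nonneg_right hC hr
  · have mem2 : |x| ∈ Ioi (1:ℝ) := hc
    have notmem1 : |x| ∉ Ioc (0:ℝ) 1 := fun hm => absurd hm.2 (not_le.2 hc)
    rw [indicator_of_mem mem2, indicator_of_notMem notmem1, zero_add]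
    have hb := J_bound_large ⟨h1, h2⟩ hc.le
    have hr : (0:ℝ) ≤ |x| ^ (-α) := Real.rpow_nonneg (abs_nonneg x) _
    have hC : (1048576*α/(1-α) + 16/α) ≤ PhiC α := by
      unfold PhiC
      linarith [div_nonneg (by linarith : (0:ℝ) ≤ 4*α) (by linarith : (0:ℝ) ≤ 1-α),
        (by positivity : (0:ℝ) ≤ 32/α)]
    calc Jfun α x ≤ (1048576*α/(1-α) + 16/α) * |x| ^ (-α) := hb
      _ ≤ PhiC α * |x| ^ (-α) := mul_le_mul_of_nonneg_right hC hr

lemma measurable_indpow {S : Set ℝ} (hS : MeasurableSet S) (hS0 : ∀ t ∈ S, 0 < t) (p : ℝ) :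
    Measurable fun x : ℝ => S.indicator (fun t => t ^ p) |x| := by
  have h1 : S.indicator (fun t : ℝ => t ^ p)
      = S.indicator (fun t => Real.exp (Real.log t * p)) := by
    funext t
    by_cases ht : t ∈ S
    · rw [indicator_of_mem ht, indicator_of_mem ht, Real.rpow_def_of_pos (hS0 t ht)]
    · rw [indicator_of_notMem ht, indicator_of_notMem ht]
  rw [h1]
  exact (((Real.measurable_log.mul_const p).exp).indicator hS).comp measurable_abs

lemma Phi_measurable {α : ℝ} : Measurable (Phi α) := by
  unfold Phi
  exact ((measurable_indpow measurableSet_Ioc (fun t ht => ht.1) _).add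
    (measurable_indpow measurableSet_Ioi (fun t ht => lt_trans one_pos (mem_Ioi.1 ht)) _)).const_mul _

lemma Phi_memL2 {α : ℝ} (hα : α ∈ Ioo (1/2:ℝ) 1) :
    MemLp (Phi α) 2 (volume : Measure ℝ) := by
  obtain ⟨h1, h2⟩ := hα
  have hmeas : AEStronglyMeasurable (Phi α) (volume : Measure ℝ) :=
    Phi_measurable.aestronglyMeasurable
  rw [memLp_two_iff_integrable_sq hmeas]
  have hsq : (fun x => Phi α x ^ 2) = fun x => (PhiC α)^2
      * ((Ioc (0:ℝ) 1).indicator (fun t => t ^ (-α)) |x|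
        + (Ioi (1:ℝ)).indicator (fun t => t ^ (-(2*α))) |x|) := by
    funext x
    rcases eq_or_ne x 0 with rfl | hx0
    · norm_num [Phi, indicator_apply, mem_Ioc, mem_Ioi]
    · have hxabs : 0 < |x| := abs_pos.2 hx0
      unfold Phi
      rcases le_or_gt |x| 1 with hc | hc
      · have mem1 : |x| ∈ Ioc (0:ℝ) 1 := ⟨hxabs, hc⟩
        have notmem2 : |x| ∉ Ioi (1:ℝ) := by simp [mem_Ioi]; exact hc
        rw [indicator_of_mem mem1, indicator_of_notMem notmem2,
          indicator_of_mem mem1, indicator_of_notMem notmem2]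
        have hpow : (|x| ^ (-(α/2)))^(2:ℕ) = |x| ^ (-α) := by
          rw [← Real.rpow_natCast (|x| ^ (-(α/2))) 2, ← Real.rpow_mul (abs_nonneg x)]
          norm_num
        rw [add_zero, add_zero, mul_pow, hpow]
      · have mem2 : |x| ∈ Ioi (1:ℝ) := hc
        have notmem1 : |x| ∉ Ioc (0:ℝ) 1 := fun hm => absurd hm.2 (not_le.2 hc)
        rw [indicator_of_mem mem2, indicator_of_notMem notmem1,
          indicator_of_mem mem2, indicator_of_notMem notmem1]
        have hpow : (|x| ^ (-α))^(2:ℕ) = |x| ^ (-(2*α)) := by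
          rw [← Real.rpow_natCast (|x| ^ (-α)) 2, ← Real.rpow_mul (abs_nonneg x)]
          norm_num; congr 1; ring
        rw [zero_add, zero_add, mul_pow, hpow]
  rw [hsq]
  exact ((integrableA (by linarith : (-1:ℝ) < -α) one_pos).add
    (integrableB (by linarith : (-(2*α):ℝ) < -1) one_pos)).const_mul _

/-- For `α ∈ (1/2, 1)`, the function `J` belongs to `L²(ℝ)` and its `L²`-norm is
bounded by a constant depending only on `α`. -/
theorem J_mem_L2 (α : ℝ) (hα : α ∈ Ioo (1 / 2 : ℝ) 1) :
    ∃ c : ℝ, 0 < c ∧ MemLp (Jfun α) 2 (volume : Measure ℝ) ∧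
      eLpNorm (Jfun α) 2 (volume : Measure ℝ) ≤ ENNReal.ofReal c := by
  have hα' : α ∈ Ioo (1/2 : ℝ) 1 := hα
  obtain ⟨h1, h2⟩ := hα
  -- measurability of J
  have hKcont : Continuous (Kfun α) := by
    have h0 : (0:ℝ) ≤ α/2 := by linarith
    unfold Kfun
    exact (continuous_abs.rpow_const (fun x => Or.inr h0)).mul
      (Real.continuous_exp.comp (continuous_const.mul (continuous_abs.rpow_const (fun x => Or.inr h0))))
  have hF : StronglyMeasurable
      (fun p : ℝ × ℝ => |Kfun α (p.1 - p.2) - Kfun α p.1| / |p.2| ^ (1+α)) := by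
    apply Measurable.stronglyMeasurable
    apply Measurable.div
    · exact (((hKcont.comp (continuous_fst.sub continuous_snd)).sub
        (hKcont.comp continuous_fst)).abs).measurable
    · exact ((continuous_abs.comp continuous_snd).rpow_const
        (fun _ => Or.inr (by linarith))).measurable
  have hJmeas : AEStronglyMeasurable (Jfun α) (volume : Measure ℝ) :=
    (hF.integral_prod_right').aestronglyMeasurable
  -- a.e. bound
  have hae : ∀ᵐ x : ℝ ∂(volume : Measure ℝ), ‖Jfun α x‖ ≤ ‖Phi α x‖ := by
    have h0 : ∀ᵐ x : ℝ ∂(volume : Measure ℝ), x ≠ 0 := by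
      have hs : (volume : Measure ℝ) {(0:ℝ)} = 0 := Real.volume_singleton
      have := compl_mem_ae_iff.mpr hs
      filter_upwards [this] with x hx
      simpa using hx
    filter_upwards [h0] with x hx
    rw [Real.norm_eq_abs, Real.norm_eq_abs, abs_of_nonneg (Jfun_nonneg α x),
      abs_of_nonneg (Phi_nonneg hα' x)]
    exact J_le_Phi hα' hx
  have hPhi := Phi_memL2 hα'
  have hmono : eLpNorm (Jfun α) 2 (volume : Measure ℝ)
      ≤ eLpNorm (Phi α) 2 (volume : Measure ℝ) := eLpNorm_mono_ae hae
  refine ⟨(eLpNorm (Phi α) 2 (volume : Measure ℝ)).toReal + 1, by positivity,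
    ⟨hJmeas, lt_of_le_of_lt hmono hPhi.2⟩, ?_⟩
  calc eLpNorm (Jfun α) 2 (volume : Measure ℝ)
      ≤ eLpNorm (Phi α) 2 (volume : Measure ℝ) := hmono
    _ = ENNReal.ofReal ((eLpNorm (Phi α) 2 (volume : Measure ℝ)).toReal) :=
        (ENNReal.ofReal_toReal hPhi.2.ne).symm
    _ ≤ ENNReal.ofReal ((eLpNorm (Phi α) 2 (volume : Measure ℝ)).toReal + 1) :=
        ENNReal.ofReal_le_ofReal (le_add_of_nonneg_right zero_le_one)
end

section
/- Let α ∈ (0,1) and K(x) = |x|^{α/2} e^{−|x|^{α/2}/2}. Then there is a constant c depending only on α such that ∫_ℝ ( ∫_{|y|>1} |K(x−y) − K(x)| |y|^{−1−α} dy )² dx ≤ c. -/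
open MeasureTheory Set

lemma Kfun_continuous {α : ℝ} (hα : 0 < α) : Continuous (Kfun α) := by
  have h1 : Continuous fun x : ℝ => |x| ^ (α / 2) :=
    continuous_abs.rpow_const fun x => Or.inr (by positivity)
  exact h1.mul (Real.continuous_exp.comp (continuous_const.mul h1))

lemma Kfun_decay {α : ℝ} (hα : 0 < α) :
    ∃ C : ℝ, 0 < C ∧ ∀ x : ℝ, Kfun α x ≤ C * (1 + x ^ 2)⁻¹ := by
  set m : ℕ := ⌈4 / α⌉₊ with hm
  set C₀ : ℝ := ((m + 1).factorial : ℝ) * 2 ^ (m + 1) with hC₀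
  have hC₀pos : 0 < C₀ := by positivity
  refine ⟨2 * C₀ + 2, by positivity, fun x => ?_⟩
  have h1x : (0 : ℝ) < 1 + x ^ 2 := by positivity
  rw [← div_eq_mul_inv, le_div_iff₀ h1x]
  set t := |x| ^ (α / 2) with htdef
  have ht0 : 0 ≤ t := Real.rpow_nonneg (abs_nonneg x) _
  have hK : Kfun α x = t * Real.exp (-(1 / 2) * t) := rfl
  have hexp1 : Real.exp (-(1 / 2) * t) ≤ 1 := by
    rw [Real.exp_le_one_iff]; nlinarith
  rcases le_or_gt |x| 1 with h | h
  · have htle : t ≤ 1 := Real.rpow_le_one (abs_nonneg x) h (by positivity)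
    have hKle : Kfun α x ≤ 1 := by
      rw [hK]; nlinarith [Real.exp_pos (-(1 / 2) * t)]
    have hx2 : x ^ 2 ≤ 1 := by nlinarith [sq_abs x, abs_nonneg x]
    nlinarith [Kfun_nonneg α x]
  · -- 1 < |x|
    have hxt : (1 : ℝ) ≤ t := by
      have h' := Real.rpow_le_rpow (by norm_num : (0:ℝ) ≤ 1) h.le
        (by positivity : 0 ≤ α / 2)
      simpa using h'
    have htpos : (0 : ℝ) < t := by linarith
    have hs : (0 : ℝ) < (1 / 2) * t := by linarith
    have hfac : ((1 / 2) * t) ^ (m + 1) / ((m + 1).factorial : ℝ) ≤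
        Real.exp ((1 / 2) * t) := Real.pow_div_factorial_le_exp ((1 / 2) * t) (by positivity) (m + 1)
    have hsk : (0 : ℝ) < ((1 / 2) * t) ^ (m + 1) := pow_pos hs _
    have hkf : (0 : ℝ) < ((m + 1).factorial : ℝ) := by positivity
    have hexp : Real.exp (-(1 / 2) * t) ≤
        ((m + 1).factorial : ℝ) / ((1 / 2) * t) ^ (m + 1) := by
      have h2 : Real.exp (-(1 / 2) * t) = (Real.exp ((1 / 2) * t))⁻¹ := by
        rw [← Real.exp_neg]; ring_nf
      rw [h2, inv_eq_one_div, div_le_div_iff₀ (Real.exp_pos _) hsk]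
      have := (div_le_iff₀ hkf).mp hfac
      nlinarith
    have hKb : Kfun α x ≤ t * (((m + 1).factorial : ℝ) / ((1 / 2) * t) ^ (m + 1)) := by
      rw [hK]; exact mul_le_mul_of_nonneg_left hexp ht0
    have htne : t ≠ 0 := ne_of_gt htpos
    have e2 : t * (((m + 1).factorial : ℝ) / ((1 / 2) * t) ^ (m + 1)) = C₀ / t ^ m := by
      have e1 : ((1 / 2) * t) ^ (m + 1) = t ^ m * t / 2 ^ (m + 1) := by
        rw [mul_pow, pow_succ t m, div_pow, one_pow]; ring
      rw [e1, hC₀]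
      field_simp
    rw [e2] at hKb
    -- x ^ 2 ≤ t ^ m
    have hpow : x ^ 2 ≤ t ^ m := by
      have h1 : t ^ m = |x| ^ ((α / 2) * (m : ℝ)) := by
        rw [htdef, ← Real.rpow_natCast (|x| ^ (α / 2)) m, ← Real.rpow_mul (abs_nonneg x)]
      have hcm : (4 / α : ℝ) ≤ (m : ℝ) := Nat.le_ceil _
      have h2 : (2 : ℝ) ≤ (α / 2) * (m : ℝ) := by
        have := mul_le_mul_of_nonneg_left hcm (by positivity : (0:ℝ) ≤ α / 2)
        have heq : (α / 2) * (4 / α) = 2 := by field_simp; ring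
        linarith [heq ▸ this]
      have h3 : |x| ^ (2 : ℝ) ≤ |x| ^ ((α / 2) * (m : ℝ)) :=
        Real.rpow_le_rpow_of_exponent_le h.le h2
      have h4 : |x| ^ (2 : ℝ) = x ^ 2 := by
        rw [show (2 : ℝ) = ((2 : ℕ) : ℝ) by norm_num, Real.rpow_natCast, sq_abs]
      rw [h1]; rw [h4] at h3; exact h3
    have htm : (0 : ℝ) < t ^ m := pow_pos htpos m
    have hKtm : Kfun α x * t ^ m ≤ C₀ := by
      rw [← le_div_iff₀ htm]; exact hKb
    have hx2 : (1 : ℝ) ≤ x ^ 2 := by nlinarith [sq_abs x, abs_nonneg x]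
    nlinarith [Kfun_nonneg α x, mul_le_mul_of_nonneg_left hpow (Kfun_nonneg α x)]

lemma Kfun_integrable {α : ℝ} (hα : 0 < α) : Integrable (Kfun α) := by
  obtain ⟨C, hC, hbd⟩ := Kfun_decay hα
  refine (integrable_inv_one_add_sq.const_mul C).mono
    (Kfun_continuous hα).aestronglyMeasurable ?_
  filter_upwards with x
  rw [Real.norm_eq_abs, abs_of_nonneg (Kfun_nonneg α x), Real.norm_eq_abs,
    abs_of_nonneg (by positivity)]
  exact hbd x

lemma phi_int_Ioi {α : ℝ} (hα : 0 < α) :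
    IntegrableOn (fun y : ℝ => |y| ^ (-(1 + α))) (Ioi (1 : ℝ)) := by
  have h := integrableOn_Ioi_rpow_of_lt (a := -(1 + α)) (by linarith) (c := (1:ℝ)) one_pos
  refine h.congr_fun (fun y hy => ?_) measurableSet_Ioi
  have : |y| = y := abs_of_pos (lt_trans one_pos hy)
  simp only [this]

lemma phi_val_Ioi {α : ℝ} (hα : 0 < α) :
    ∫ y in Ioi (1 : ℝ), |y| ^ (-(1 + α)) = 1 / α := by
  have hcong : EqOn (fun y : ℝ => |y| ^ (-(1 + α))) (fun y : ℝ => y ^ (-(1 + α))) (Ioi 1) := by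
    intro y hy
    have : |y| = y := abs_of_pos (lt_trans one_pos hy)
    simp only [this]
  rw [setIntegral_congr_fun measurableSet_Ioi hcong,
    integral_Ioi_rpow_of_lt (by linarith) one_pos, Real.one_rpow]
  rw [show (-(1 + α) + 1 : ℝ) = -α by ring]
  rw [div_neg, neg_div, neg_neg]

lemma phi_int_Iio {α : ℝ} (hα : 0 < α) :
    IntegrableOn (fun y : ℝ => |y| ^ (-(1 + α))) (Iio (-1 : ℝ)) := by
  have m : MeasurableEmbedding fun x : ℝ => -x := (Homeomorph.neg ℝ).measurableEmbedding
  rw [← Measure.map_neg_eq_self (volume : Measure ℝ)]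
  rw [show (Measure.map Neg.neg (volume : Measure ℝ)) =
    Measure.map (fun x : ℝ => -x) volume from rfl, m.integrableOn_map_iff]
  have hpre : (fun x : ℝ => -x) ⁻¹' (Iio (-1)) = Ioi 1 := by
    ext y; simp [mem_Iio, mem_Ioi]
  rw [hpre]
  refine (phi_int_Ioi hα).congr_fun (fun y hy => ?_) measurableSet_Ioi
  simp [Function.comp, abs_neg]

lemma phi_val_Iio {α : ℝ} (hα : 0 < α) :
    ∫ y in Iio (-1 : ℝ), |y| ^ (-(1 + α)) = 1 / α := by
  have m : MeasurableEmbedding fun x : ℝ => -x := (Homeomorph.neg ℝ).measurableEmbedding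
  have h1 : ∫ y in Iio (-1 : ℝ), |y| ^ (-(1 + α)) =
      ∫ y in Iio (-1 : ℝ), |y| ^ (-(1 + α)) ∂(Measure.map (fun x : ℝ => -x) volume) := by
    rw [show Measure.map (fun x : ℝ => -x) (volume : Measure ℝ) =
      Measure.map Neg.neg volume from rfl, Measure.map_neg_eq_self]
  rw [h1, m.setIntegral_map]
  have hpre : (fun x : ℝ => -x) ⁻¹' (Iio (-1)) = Ioi 1 := by
    ext y; simp [mem_Iio, mem_Ioi]
  rw [hpre]
  simp_rw [abs_neg]
  exact phi_val_Ioi hα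

/-- For `α ∈ (0,1)`,
`∫_ℝ ( ∫_{|y|>1} |K(x−y) − K(x)| |y|^{−1−α} dy )² dx ≤ c` for a constant `c`
depending only on `α`. -/
theorem I1_bound (α : ℝ) (hα : α ∈ Ioo (0 : ℝ) 1) :
    ∃ c : ℝ, 0 < c ∧
      ∫⁻ x : ℝ, ENNReal.ofReal
          ((∫ y in {y : ℝ | 1 < |y|}, |Kfun α (x - y) - Kfun α x| / |y| ^ (1 + α)) ^ 2)
        ≤ ENNReal.ofReal c := by
  obtain ⟨hα0, hα1⟩ := hα
  have hKc := Kfun_continuous hα0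
  have hKint := Kfun_integrable hα0
  set S : Set ℝ := {y : ℝ | 1 < |y|} with hS
  have hSeq : S = Iio (-1) ∪ Ioi 1 := by
    ext y
    simp only [hS, mem_setOf_eq, mem_union, mem_Iio, mem_Ioi, lt_abs]
    constructor
    · rintro (h | h)
      · right; exact h
      · left; linarith
    · rintro (h | h)
      · right; linarith
      · left; exact h
  have hSm : MeasurableSet S := by
    rw [hSeq]; exact measurableSet_Iio.union measurableSet_Ioi
  have hdisj : Disjoint (Iio (-1 : ℝ)) (Ioi 1) := by
    refine Set.disjoint_left.2 fun a ha hb => ?_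
    simp only [mem_Iio, mem_Ioi] at ha hb
    linarith
  set φ : ℝ → ℝ := fun y => |y| ^ (-(1 + α)) with hφ
  have hφ0 : ∀ y, 0 ≤ φ y := fun y => Real.rpow_nonneg (abs_nonneg y) _
  have hφS_int : IntegrableOn φ S := by
    rw [hSeq]; exact (phi_int_Iio hα0).union (phi_int_Ioi hα0)
  have hφS_val : ∫ y in S, φ y = 2 / α := by
    rw [hSeq, setIntegral_union hdisj measurableSet_Ioi (phi_int_Iio hα0) (phi_int_Ioi hα0),
      phi_val_Iio hα0, phi_val_Ioi hα0]
    ring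
  set KI : ℝ := ∫ x, Kfun α x with hKI
  have hKI0 : 0 ≤ KI := integral_nonneg fun x => Kfun_nonneg α x
  have hL : ∫⁻ x, ENNReal.ofReal (Kfun α x) = ENNReal.ofReal KI :=
    (ofReal_integral_eq_lintegral_ofReal hKint
      (Filter.Eventually.of_forall (Kfun_nonneg α))).symm
  -- the inner integral
  set In : ℝ → ℝ := fun x => ∫ y in S, |Kfun α (x - y) - Kfun α x| / |y| ^ (1 + α) with hIn
  have hIn0 : ∀ x, 0 ≤ In x := fun x => integral_nonneg fun y => by positivity
  have hnum : ∀ x y : ℝ, |Kfun α (x - y) - Kfun α x| ≤ 4 := by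
    intro x y
    have h1 := Kfun_le_two α (x - y)
    have h2 := Kfun_le_two α x
    have h3 := Kfun_nonneg α (x - y)
    have h4 := Kfun_nonneg α x
    rw [abs_le]; constructor <;> linarith
  have hInU : ∀ x, In x ≤ 8 / α := by
    intro x
    have hb : ∀ y : ℝ, |Kfun α (x - y) - Kfun α x| / |y| ^ (1 + α) ≤ 4 * φ y := by
      intro y
      rcases eq_or_ne y 0 with rfl | hy
      · have h1 : (0 : ℝ) ^ (1 + α) = 0 := Real.zero_rpow (by positivity)
        have h2 : (0 : ℝ) ^ (-(1 + α)) = 0 :=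
          Real.zero_rpow (ne_of_lt (by linarith : -(1 + α) < 0))
        show |Kfun α (x - 0) - Kfun α x| / |(0:ℝ)| ^ (1 + α) ≤ 4 * |(0:ℝ)| ^ (-(1 + α))
        rw [abs_zero, h1, h2, div_zero, mul_zero]
      · have hd : (0 : ℝ) < |y| ^ (1 + α) := Real.rpow_pos_of_pos (abs_pos.2 hy) _
        have heq : 4 * φ y = 4 / |y| ^ (1 + α) := by
          show 4 * |y| ^ (-(1 + α)) = 4 / |y| ^ (1 + α)
          rw [Real.rpow_neg (abs_nonneg y)]; ring
        rw [heq]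
        exact (div_le_div_iff_of_pos_right hd).mpr (hnum x y)
    calc In x ≤ ∫ y in S, 4 * φ y :=
          integral_mono_of_nonneg
            (Filter.Eventually.of_forall fun y => by positivity)
            (hφS_int.const_mul 4)
            (Filter.Eventually.of_forall hb)
      _ = 4 * (2 / α) := by rw [integral_const_mul, hφS_val]
      _ = 8 / α := by ring
  -- the double lintegral kernel
  set F : ℝ → ℝ → ENNReal := fun x y =>
    ENNReal.ofReal (|Kfun α (x - y) - Kfun α x| / |y| ^ (1 + α)) with hF
  have hFm : AEMeasurable (Function.uncurry F)
      ((volume : Measure ℝ).prod ((volume : Measure ℝ).restrict S)) := by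
    have hm1 : Measurable fun p : ℝ × ℝ => |Kfun α (p.1 - p.2) - Kfun α p.1| :=
      (((hKc.comp (continuous_fst.sub continuous_snd)).sub
        (hKc.comp continuous_fst)).abs).measurable
    have hm2 : Measurable fun p : ℝ × ℝ => |p.2| ^ (1 + α) :=
      (continuous_snd.abs.rpow_const fun _ => Or.inr (by positivity)).measurable
    exact (ENNReal.measurable_ofReal.comp (hm1.div hm2)).aemeasurable
  -- inner x-lintegral bound for fixed y ∈ S
  have hyb : ∀ y ∈ S, (∫⁻ x, F x y) ≤ 2 * ENNReal.ofReal KI * ENNReal.ofReal (φ y) := by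
    intro y hy
    have hy1 : 1 < |y| := hy
    have hy0 : y ≠ 0 := by intro h; rw [h, abs_zero] at hy1; linarith
    have hd : (0 : ℝ) < |y| ^ (1 + α) := Real.rpow_pos_of_pos (abs_pos.2 hy0) _
    have hstep1 : ∀ x : ℝ, F x y =
        ENNReal.ofReal |Kfun α (x - y) - Kfun α x| * ENNReal.ofReal (φ y) := by
      intro x
      rw [hF]
      simp only
      rw [div_eq_mul_inv, ENNReal.ofReal_mul' (by positivity)]
      congr 1
      exact congrArg ENNReal.ofReal (Real.rpow_neg (abs_nonneg y) (1 + α)).symm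
    calc (∫⁻ x, F x y)
        = ∫⁻ x, ENNReal.ofReal |Kfun α (x - y) - Kfun α x| * ENNReal.ofReal (φ y) := by
          exact lintegral_congr hstep1
      _ = (∫⁻ x, ENNReal.ofReal |Kfun α (x - y) - Kfun α x|) * ENNReal.ofReal (φ y) :=
          lintegral_mul_const' _ _ ENNReal.ofReal_ne_top
      _ ≤ (2 * ENNReal.ofReal KI) * ENNReal.ofReal (φ y) := by
          refine mul_le_mul_left ?_ _
          have hle : (∫⁻ x, ENNReal.ofReal |Kfun α (x - y) - Kfun α x|) ≤
              ∫⁻ x, (ENNReal.ofReal (Kfun α (x - y)) + ENNReal.ofReal (Kfun α x)) := by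
            refine lintegral_mono fun x => ?_
            rw [← ENNReal.ofReal_add (Kfun_nonneg α _) (Kfun_nonneg α _)]
            refine ENNReal.ofReal_le_ofReal ?_
            have h3 := Kfun_nonneg α (x - y)
            have h4 := Kfun_nonneg α x
            rw [abs_le]; constructor <;> linarith
          have hmeas : Measurable fun x : ℝ => ENNReal.ofReal (Kfun α (x - y)) :=
            ENNReal.measurable_ofReal.comp
              (hKc.measurable.comp (measurable_id.sub measurable_const))
          have hsplit : (∫⁻ x, (ENNReal.ofReal (Kfun α (x - y)) +
              ENNReal.ofReal (Kfun α x))) =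
              (∫⁻ x, ENNReal.ofReal (Kfun α (x - y))) +
              ∫⁻ x, ENNReal.ofReal (Kfun α x) :=
            lintegral_add_left hmeas _
          have htrans : (∫⁻ x, ENNReal.ofReal (Kfun α (x - y))) =
              ∫⁻ x, ENNReal.ofReal (Kfun α x) :=
            lintegral_sub_right_eq_self (fun x => ENNReal.ofReal (Kfun α x)) y
          refine hle.trans ?_
          rw [hsplit, htrans, hL, two_mul]
  -- main chain
  have hmain : (∫⁻ x, ENNReal.ofReal ((In x) ^ 2)) ≤
      ENNReal.ofReal (8 / α) * ((2 * ENNReal.ofReal KI) * ENNReal.ofReal (2 / α)) := by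
    calc (∫⁻ x, ENNReal.ofReal ((In x) ^ 2))
        ≤ ∫⁻ x, ENNReal.ofReal (8 / α) * ENNReal.ofReal (In x) := by
          refine lintegral_mono fun x => ?_
          rw [← ENNReal.ofReal_mul (by positivity : (0:ℝ) ≤ 8 / α)]
          refine ENNReal.ofReal_le_ofReal ?_
          have h1 := hIn0 x
          have h2 := hInU x
          nlinarith
      _ = ENNReal.ofReal (8 / α) * ∫⁻ x, ENNReal.ofReal (In x) :=
          lintegral_const_mul' _ _ ENNReal.ofReal_ne_top
      _ ≤ ENNReal.ofReal (8 / α) * ((2 * ENNReal.ofReal KI) * ENNReal.ofReal (2 / α)) := by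
          refine mul_le_mul_right ?_ _
          calc (∫⁻ x, ENNReal.ofReal (In x))
              ≤ ∫⁻ x, ∫⁻ y in S, F x y := by
                refine lintegral_mono fun x => ?_
                by_cases hfi : IntegrableOn
                    (fun y => |Kfun α (x - y) - Kfun α x| / |y| ^ (1 + α)) S
                · rw [hIn]
                  simp only
                  rw [ofReal_integral_eq_lintegral_ofReal hfi
                    (Filter.Eventually.of_forall fun y => by positivity)]
                · rw [hIn]
                  simp only
                  rw [integral_undef hfi]
                  simp
            _ = ∫⁻ y in S, ∫⁻ x, F x y := lintegral_lintegral_swap hFm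
            _ ≤ ∫⁻ y in S, (2 * ENNReal.ofReal KI) * ENNReal.ofReal (φ y) := by
                refine lintegral_mono_ae ?_
                rw [ae_restrict_iff' hSm]
                exact Filter.Eventually.of_forall hyb
            _ = (2 * ENNReal.ofReal KI) * ∫⁻ y in S, ENNReal.ofReal (φ y) :=
                lintegral_const_mul' _ _
                  (ENNReal.mul_ne_top (by simp) ENNReal.ofReal_ne_top)
            _ = (2 * ENNReal.ofReal KI) * ENNReal.ofReal (2 / α) := by
                rw [← ofReal_integral_eq_lintegral_ofReal hφS_int
                  (Filter.Eventually.of_forall hφ0), hφS_val]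
  refine ⟨(8 / α) * ((2 * KI) * (2 / α)) + 1, by positivity, ?_⟩
  refine hmain.trans ?_
  have he : ENNReal.ofReal (8 / α) * ((2 * ENNReal.ofReal KI) * ENNReal.ofReal (2 / α)) =
      ENNReal.ofReal ((8 / α) * ((2 * KI) * (2 / α))) := by
    have h2 : (2 : ENNReal) * ENNReal.ofReal KI = ENNReal.ofReal (2 * KI) := by
      rw [ENNReal.ofReal_mul (by norm_num : (0:ℝ) ≤ 2), ENNReal.ofReal_ofNat]
    rw [h2, ← ENNReal.ofReal_mul (by positivity : (0:ℝ) ≤ 2 * KI),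
      ← ENNReal.ofReal_mul (by positivity : (0:ℝ) ≤ 8 / α)]
  rw [he]
  exact ENNReal.ofReal_le_ofReal (by nlinarith [mul_nonneg (mul_nonneg (by positivity : (0:ℝ) ≤ 8/α) (by positivity : (0:ℝ) ≤ 2*KI)) (by positivity : (0:ℝ) ≤ 2/α)])
end

section
/- Let α ∈ (1/2, 1) and K(x) = |x|^{α/2} e^{−|x|^{α/2}/2}. Then there is a constant c depending only on α such that ∫_{|x|>2} ( ∫_{|y|<1} |K(x−y) − K(x)| |y|^{−1−α} dy )² dx ≤ c. -/
open MeasureTheory Set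

lemma mvt_bound (α : ℝ) (hα : α ∈ Ioo (1 / 2 : ℝ) 1) {m s t : ℝ} (hm : 1 ≤ m)
    (hs : m ≤ s) (ht : m ≤ t) :
    |s ^ (α / 2) * Real.exp (-(1 / 2) * s ^ (α / 2))
      - t ^ (α / 2) * Real.exp (-(1 / 2) * t ^ (α / 2))|
      ≤ α * Real.exp (-(m ^ (α / 2) / 4)) * |s - t| := by
  obtain ⟨hα1, hα2⟩ := hα
  set β := α / 2 with hβ
  have hβ0 : 0 < β := by rw [hβ]; linarith
  have hβ1 : β ≤ 1 := by rw [hβ]; linarith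
  set F : ℝ → ℝ := fun t => t ^ β * Real.exp (-(1 / 2) * t ^ β) with hF
  set F' : ℝ → ℝ := fun t => β * t ^ (β - 1) * Real.exp (-(1 / 2) * t ^ β)
    + t ^ β * (Real.exp (-(1 / 2) * t ^ β) * (-(1 / 2) * (β * t ^ (β - 1)))) with hF'
  have hder : ∀ z ∈ Ici m, HasDerivWithinAt F (F' z) (Ici m) z := by
    intro z hz
    have hz0 : (0 : ℝ) < z := lt_of_lt_of_le (by linarith) hz
    have d1 := Real.hasDerivAt_rpow_const (x := z) (p := β) (Or.inl hz0.ne')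
    exact ((d1.mul ((d1.const_mul (-(1/2 : ℝ))).exp)).congr_deriv (by rw [hF'])).hasDerivWithinAt
  have hbound : ∀ z ∈ Ici m, ‖F' z‖ ≤ α * Real.exp (-(m ^ β / 4)) := by
    intro z hz
    have hz1 : (1 : ℝ) ≤ z := le_trans hm hz
    have hz0 : (0 : ℝ) < z := by linarith
    have hu0 : 0 ≤ z ^ β := Real.rpow_nonneg hz0.le _
    have hE : (0 : ℝ) < Real.exp (-(1 / 2) * z ^ β) := Real.exp_pos _
    have h1 : F' z = β * z ^ (β - 1) * Real.exp (-(1 / 2) * z ^ β) * (1 - z ^ β / 2) := by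
      rw [hF']; ring
    have h2 : ‖F' z‖ = β * z ^ (β - 1) * Real.exp (-(1 / 2) * z ^ β) * |1 - z ^ β / 2| := by
      rw [h1, Real.norm_eq_abs, abs_mul]
      congr 1
      rw [abs_of_nonneg (by positivity)]
    have h3 : |1 - z ^ β / 2| ≤ 1 + z ^ β / 2 := by
      rw [abs_le]; constructor <;> nlinarith
    have h4 : z ^ (β - 1) ≤ 1 :=
      Real.rpow_le_one_of_one_le_of_nonpos hz1 (by linarith)
    have h5 : Real.exp (-(1 / 2) * z ^ β) * (1 + z ^ β / 2) ≤ 2 * Real.exp (-(z ^ β / 4)) := by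
      have e1 : 1 + z ^ β / 2 ≤ 2 * Real.exp (z ^ β / 4) := by
        have := Real.add_one_le_exp (z ^ β / 4)
        nlinarith [Real.exp_pos (z ^ β / 4)]
      calc Real.exp (-(1 / 2) * z ^ β) * (1 + z ^ β / 2)
          ≤ Real.exp (-(1 / 2) * z ^ β) * (2 * Real.exp (z ^ β / 4)) := by
            exact mul_le_mul_of_nonneg_left e1 hE.le
        _ = 2 * Real.exp (-(1 / 2) * z ^ β + z ^ β / 4) := by rw [Real.exp_add]; ring
        _ = 2 * Real.exp (-(z ^ β / 4)) := by congr 1; ring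
    have h6 : Real.exp (-(z ^ β / 4)) ≤ Real.exp (-(m ^ β / 4)) := by
      apply Real.exp_le_exp.2
      have : m ^ β ≤ z ^ β := Real.rpow_le_rpow (by linarith) hz hβ0.le
      linarith
    calc ‖F' z‖ = β * z ^ (β - 1) * Real.exp (-(1 / 2) * z ^ β) * |1 - z ^ β / 2| := h2
      _ ≤ β * 1 * (Real.exp (-(1 / 2) * z ^ β) * (1 + z ^ β / 2)) := by
          have hb1 : β * z ^ (β - 1) ≤ β * 1 := mul_le_mul_of_nonneg_left h4 hβ0.le
          have := mul_le_mul (mul_le_mul hb1 le_rfl hE.le (by positivity)) h3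
            (abs_nonneg _) (by positivity)
          calc β * z ^ (β - 1) * Real.exp (-(1 / 2) * z ^ β) * |1 - z ^ β / 2|
              ≤ β * 1 * Real.exp (-(1 / 2) * z ^ β) * (1 + z ^ β / 2) := this
            _ = β * 1 * (Real.exp (-(1 / 2) * z ^ β) * (1 + z ^ β / 2)) := by ring
      _ ≤ β * 1 * (2 * Real.exp (-(z ^ β / 4))) :=
          mul_le_mul_of_nonneg_left h5 (by positivity)
      _ ≤ β * 1 * (2 * Real.exp (-(m ^ β / 4))) := by
          refine mul_le_mul_of_nonneg_left ?_ (by positivity)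
          exact mul_le_mul_of_nonneg_left h6 (by norm_num)
      _ = α * Real.exp (-(m ^ β / 4)) := by rw [hβ]; ring
  have := Convex.norm_image_sub_le_of_norm_hasDerivWithin_le hder hbound (convex_Ici m) ht hs
  simpa [Real.norm_eq_abs, hF] using this

lemma Kdiff (α : ℝ) (hα : α ∈ Ioo (1 / 2 : ℝ) 1) {x y : ℝ} (hx : 2 < |x|) (hy : |y| < 1) :
    |Kfun α (x - y) - Kfun α x| ≤ α * Real.exp (-((|x| - 1) ^ (α / 2) / 4)) * |y| := by
  have hm : 1 ≤ |x| - 1 := by linarith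
  have hs : |x| - 1 ≤ |x - y| := by
    have h1 := abs_sub_abs_le_abs_sub x (x - y)
    have h2 : x - (x - y) = y := by ring
    rw [h2] at h1
    linarith
  have ht : |x| - 1 ≤ |x| := by linarith
  have key := mvt_bound α hα hm hs ht
  have h3 : abs (|x - y| - |x|) ≤ |y| := by
    refine (abs_abs_sub_abs_le_abs_sub _ _).trans ?_
    rw [show x - y - x = -y by ring, abs_neg]
  simp only [Kfun]
  exact key.trans (mul_le_mul_of_nonneg_left h3
    (mul_nonneg (by linarith [hα.1]) (Real.exp_pos _).le))

lemma integrableOn_of_comp_neg {f : ℝ → ℝ} {s : Set ℝ}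
    (h : IntegrableOn (fun x => f (-x)) ((fun x : ℝ => -x) ⁻¹' s)) : IntegrableOn f s := by
  have m : MeasurableEmbedding (fun x : ℝ => -x) := (Homeomorph.neg ℝ).measurableEmbedding
  rw [IntegrableOn, ← Measure.map_neg_eq_self (volume : Measure ℝ), m.restrict_map,
    m.integrable_map_iff]
  exact h

lemma int_abs_rpow {α : ℝ} (hα : α < 1) :
    IntegrableOn (fun y : ℝ => |y| ^ (-α)) (Ioo (-1 : ℝ) 1) := by
  have h1 : IntegrableOn (fun y : ℝ => y ^ (-α)) (Ioo (0 : ℝ) 1) :=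
    (intervalIntegral.integrableOn_Ioo_rpow_iff one_pos).2 (by linarith)
  have h2 : IntegrableOn (fun y : ℝ => |y| ^ (-α)) (Ioo (0 : ℝ) 1) := by
    refine h1.congr_fun (fun y hy => ?_) measurableSet_Ioo
    rw [abs_of_pos hy.1]
  have h3 : IntegrableOn (fun y : ℝ => |y| ^ (-α)) (Ico (0 : ℝ) 1) :=
    (integrableOn_Ico_iff_integrableOn_Ioo (by simp)).2 h2
  have h4 : IntegrableOn (fun y : ℝ => |y| ^ (-α)) (Ioo (-1 : ℝ) 0) := by
    apply integrableOn_of_comp_neg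
    have hset : ((fun x : ℝ => -x) ⁻¹' Ioo (-1 : ℝ) 0) = Ioo (0 : ℝ) 1 := by
      ext x; simp only [mem_preimage, mem_Ioo]
      constructor <;> exact fun h => ⟨by linarith [h.1, h.2], by linarith [h.1, h.2]⟩
    rw [hset]
    refine h2.congr_fun (fun y hy => ?_) measurableSet_Ioo
    rw [abs_neg]
  have : Ioo (-1 : ℝ) 1 = Ioo (-1 : ℝ) 0 ∪ Ico (0 : ℝ) 1 :=
    (Ioo_union_Ico_eq_Ioo (by norm_num) (by norm_num)).symm
  rw [this]
  exact h4.union h3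

lemma exp_tail {β : ℝ} (hβ : 1 / 4 ≤ β) {x : ℝ} (hx : 2 < x) :
    Real.exp (-((x - 1) ^ β / 2)) ≤ 41287680 * x ^ (-2 : ℝ) := by
  have h1 : (1 : ℝ) ≤ x - 1 := by linarith
  have hx0 : (0 : ℝ) < x := by linarith
  have h2 : ((x - 1) ^ β) ^ (8 : ℕ) = (x - 1) ^ (β * 8) := by
    rw [← Real.rpow_natCast ((x - 1) ^ β) 8, ← Real.rpow_mul (by linarith)]
    norm_num
  have h3 : (x - 1) ^ (2 : ℝ) ≤ (x - 1) ^ (β * 8) :=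
    Real.rpow_le_rpow_of_exponent_le h1 (by linarith)
  have h4 : (x - 1) ^ (2 : ℝ) = (x - 1) ^ (2 : ℕ) := by
    rw [← Real.rpow_natCast (x - 1) 2]; norm_num
  have h5 : (x / 2) ^ (2 : ℕ) ≤ (x - 1) ^ (2 : ℕ) :=
    pow_le_pow_left₀ (by linarith) (by linarith) 2
  have h6 : x ^ 2 / 4 ≤ ((x - 1) ^ β) ^ (8 : ℕ) := by
    rw [h2]
    calc x ^ 2 / 4 = (x / 2) ^ (2 : ℕ) := by ring
      _ ≤ (x - 1) ^ (2 : ℕ) := h5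
      _ = (x - 1) ^ (2 : ℝ) := h4.symm
      _ ≤ (x - 1) ^ (β * 8) := h3
  have h7 : ((x - 1) ^ β / 2) ^ (8 : ℕ) / (Nat.factorial 8 : ℝ) ≤ Real.exp ((x - 1) ^ β / 2) :=
    Real.pow_div_factorial_le_exp (x := (x - 1) ^ β / 2) (by positivity) 8
  have h8 : x ^ 2 / 41287680 ≤ Real.exp ((x - 1) ^ β / 2) := by
    have hf : ((Nat.factorial 8 : ℕ) : ℝ) = 40320 := by norm_num [Nat.factorial]
    have he : ((x - 1) ^ β / 2) ^ (8 : ℕ) = ((x - 1) ^ β) ^ (8 : ℕ) / 256 := by ring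
    rw [he, hf] at h7
    calc x ^ 2 / 41287680 = (x ^ 2 / 4) / 256 / 40320 := by ring
      _ ≤ ((x - 1) ^ β) ^ (8 : ℕ) / 256 / 40320 := by gcongr
      _ ≤ Real.exp ((x - 1) ^ β / 2) := h7
  have hex : (0 : ℝ) < Real.exp ((x - 1) ^ β / 2) := Real.exp_pos _
  rw [Real.exp_neg, Real.rpow_neg hx0.le]
  have hx2 : x ^ (2 : ℝ) = x ^ (2 : ℕ) := by rw [← Real.rpow_natCast x 2]; norm_num
  rw [hx2]
  have h9 := inv_anti₀ (show (0 : ℝ) < x ^ (2 : ℕ) / 41287680 by positivity) h8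
  calc (Real.exp ((x - 1) ^ β / 2))⁻¹ ≤ (x ^ (2 : ℕ) / 41287680)⁻¹ := h9
    _ = 41287680 * (x ^ (2 : ℕ))⁻¹ := by rw [inv_div, div_eq_mul_inv]

lemma ptwise (α : ℝ) (hα : α ∈ Ioo (1 / 2 : ℝ) 1) {x y : ℝ} (hx : 2 < |x|) (hy : |y| < 1) :
    |Kfun α (x - y) - Kfun α x| / |y| ^ (1 + α)
      ≤ α * Real.exp (-((|x| - 1) ^ (α / 2) / 4)) * |y| ^ (-α) := by
  rcases eq_or_ne y 0 with rfl | hy0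
  · simp [Real.zero_rpow (show -α ≠ 0 by intro h; rw [neg_eq_zero] at h; rw [h] at hα; exact absurd hα.1 (by norm_num))]
  · have h0 : 0 < |y| := abs_pos.2 hy0
    have hnum := Kdiff α hα hx hy
    have hden : (0 : ℝ) < |y| ^ (1 + α) := Real.rpow_pos_of_pos h0 _
    have hdiv : |y| ^ (-α) = |y| / |y| ^ (1 + α) := by
      rw [show -α = 1 - (1 + α) by ring, Real.rpow_sub h0, Real.rpow_one]
    calc |Kfun α (x - y) - Kfun α x| / |y| ^ (1 + α)
        ≤ (α * Real.exp (-((|x| - 1) ^ (α / 2) / 4)) * |y|) / |y| ^ (1 + α) := by gcongr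
      _ = α * Real.exp (-((|x| - 1) ^ (α / 2) / 4)) * |y| ^ (-α) := by
          rw [hdiv, mul_div_assoc]

/-- For `α ∈ (1/2, 1)`,
`∫_{|x|>2} ( ∫_{|y|<1} |K(x−y) − K(x)| |y|^{−1−α} dy )² dx ≤ c` for a constant `c`
depending only on `α`. -/
theorem I2_bound (α : ℝ) (hα : α ∈ Ioo (1 / 2 : ℝ) 1) :
    ∃ c : ℝ, 0 < c ∧
      ∫⁻ x in {x : ℝ | 2 < |x|}, ENNReal.ofReal
          ((∫ y in {y : ℝ | |y| < 1}, |Kfun α (x - y) - Kfun α x| / |y| ^ (1 + α)) ^ 2)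
        ≤ ENNReal.ofReal c := by
  obtain ⟨hα1, hα2⟩ := hα
  have hαIoo : α ∈ Ioo (1 / 2 : ℝ) 1 := ⟨hα1, hα2⟩
  have hT : {y : ℝ | |y| < 1} = Ioo (-1 : ℝ) 1 := by
    ext y; simp [abs_lt]
  have hS : {x : ℝ | 2 < |x|} = Iio (-2 : ℝ) ∪ Ioi (2 : ℝ) := by
    ext x
    simp only [mem_setOf_eq, mem_union, mem_Iio, mem_Ioi, lt_abs]
    constructor
    · rintro (h | h)
      · right; exact h
      · left; linarith
    · rintro (h | h)
      · right; linarith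
      · left; exact h
  set Iα := ∫ y in Ioo (-1 : ℝ) 1, |y| ^ (-α) with hIαdef
  have hIαint := int_abs_rpow hα2
  have hIα0 : 0 ≤ Iα := integral_nonneg fun y => Real.rpow_nonneg (abs_nonneg y) _
  set G : ℝ → ℝ := fun x => α ^ 2 * Iα ^ 2 * Real.exp (-((|x| - 1) ^ (α / 2) / 2)) with hG
  have hG0 : ∀ x, 0 ≤ G x := fun x => by rw [hG]; positivity
  have hGcont : Continuous G := by
    rw [hG]
    exact continuous_const.mul
      ((((Real.continuous_rpow_const (by linarith : (0:ℝ) ≤ α / 2)).comp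
        (continuous_abs.sub continuous_const)).div_const 2).neg.rexp)
  have hGmeas : Measurable G := hGcont.measurable
  have hpos : IntegrableOn G (Ioi (2 : ℝ)) := by
    have hint : IntegrableOn (fun x : ℝ => α ^ 2 * Iα ^ 2 * (41287680 * x ^ (-2 : ℝ)))
        (Ioi (2 : ℝ)) :=
      (((integrableOn_Ioi_rpow_of_lt (by norm_num) (by norm_num : (0:ℝ) < 2)).const_mul
        41287680).const_mul _)
    apply Integrable.mono' hint hGmeas.aestronglyMeasurable
    filter_upwards [ae_restrict_mem measurableSet_Ioi] with x hx
    have h2x : (2 : ℝ) < x := hx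
    have habs : |x| = x := abs_of_pos (by linarith)
    rw [Real.norm_eq_abs, abs_of_nonneg (hG0 x), hG]
    simp only [habs]
    have := exp_tail (show 1 / 4 ≤ α / 2 by linarith) h2x
    calc α ^ 2 * Iα ^ 2 * Real.exp (-((x - 1) ^ (α / 2) / 2))
        ≤ α ^ 2 * Iα ^ 2 * (41287680 * x ^ (-2 : ℝ)) := by gcongr
      _ = α ^ 2 * Iα ^ 2 * (41287680 * x ^ (-2 : ℝ)) := rfl
  have hneg : IntegrableOn G (Iio (-2 : ℝ)) := by
    apply integrableOn_of_comp_neg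
    have hset : ((fun x : ℝ => -x) ⁻¹' Iio (-2 : ℝ)) = Ioi (2 : ℝ) := by
      ext x; simp only [mem_preimage, mem_Iio, mem_Ioi]
      constructor <;> intro h <;> linarith
    rw [hset]
    have hGn : (fun x : ℝ => G (-x)) = G := by
      funext x; rw [hG]; simp [abs_neg]
    rw [hGn]
    exact hpos
  have hGint : IntegrableOn G {x : ℝ | 2 < |x|} := by
    rw [hS]; exact hneg.union hpos
  have hInner : ∀ x : ℝ, 2 < |x| →
      (∫ y in Ioo (-1 : ℝ) 1, |Kfun α (x - y) - Kfun α x| / |y| ^ (1 + α))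
        ≤ α * Real.exp (-((|x| - 1) ^ (α / 2) / 4)) * Iα := by
    intro x hx
    have hgi : Integrable
        (fun y : ℝ => α * Real.exp (-((|x| - 1) ^ (α / 2) / 4)) * |y| ^ (-α))
        (volume.restrict (Ioo (-1 : ℝ) 1)) := hIαint.const_mul _
    have hmono := integral_mono_of_nonneg
      (f := fun y => |Kfun α (x - y) - Kfun α x| / |y| ^ (1 + α))
      (g := fun y : ℝ => α * Real.exp (-((|x| - 1) ^ (α / 2) / 4)) * |y| ^ (-α))
      (ae_of_all _ fun y => by positivity) hgi ?_
    · calc (∫ y in Ioo (-1 : ℝ) 1, |Kfun α (x - y) - Kfun α x| / |y| ^ (1 + α))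
          ≤ ∫ y in Ioo (-1 : ℝ) 1,
              α * Real.exp (-((|x| - 1) ^ (α / 2) / 4)) * |y| ^ (-α) := hmono
        _ = α * Real.exp (-((|x| - 1) ^ (α / 2) / 4)) * Iα := by
            rw [hIαdef, integral_const_mul]
    · filter_upwards [ae_restrict_mem measurableSet_Ioo] with y hy
      exact ptwise α hαIoo hx (abs_lt.2 ⟨hy.1, hy.2⟩)
  refine ⟨(∫ x in {x : ℝ | 2 < |x|}, G x) + 1, ?_, ?_⟩
  · have : 0 ≤ ∫ x in {x : ℝ | 2 < |x|}, G x := integral_nonneg hG0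
    linarith
  simp only [hT]
  calc ∫⁻ x in {x : ℝ | 2 < |x|}, ENNReal.ofReal
        ((∫ y in Ioo (-1 : ℝ) 1, |Kfun α (x - y) - Kfun α x| / |y| ^ (1 + α)) ^ 2)
      ≤ ∫⁻ x in {x : ℝ | 2 < |x|}, ENNReal.ofReal (G x) := by
        apply setLIntegral_mono hGmeas.ennreal_ofReal
        intro x hx
        apply ENNReal.ofReal_le_ofReal
        have hx' : 2 < |x| := hx
        have hI0 : 0 ≤ ∫ y in Ioo (-1 : ℝ) 1, |Kfun α (x - y) - Kfun α x| / |y| ^ (1 + α) :=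
          integral_nonneg fun y => by positivity
        have hIB := hInner x hx'
        have hE2 : Real.exp (-((|x| - 1) ^ (α / 2) / 4)) ^ 2
            = Real.exp (-((|x| - 1) ^ (α / 2) / 2)) := by
          rw [sq, ← Real.exp_add]; congr 1; ring
        calc (∫ y in Ioo (-1 : ℝ) 1, |Kfun α (x - y) - Kfun α x| / |y| ^ (1 + α)) ^ 2
            ≤ (α * Real.exp (-((|x| - 1) ^ (α / 2) / 4)) * Iα) ^ 2 :=
              pow_le_pow_left₀ hI0 hIB 2
          _ = α ^ 2 * Iα ^ 2 * Real.exp (-((|x| - 1) ^ (α / 2) / 4)) ^ 2 := by ring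
          _ = G x := by rw [hE2, hG]
    _ = ENNReal.ofReal (∫ x in {x : ℝ | 2 < |x|}, G x) :=
        (ofReal_integral_eq_lintegral_ofReal hGint (ae_of_all _ hG0)).symm
    _ ≤ ENNReal.ofReal ((∫ x in {x : ℝ | 2 < |x|}, G x) + 1) :=
        ENNReal.ofReal_le_ofReal (by linarith)
end

section
/- Let α ∈ (0,1) and K(x) = |x|^{α/2} e^{−|x|^{α/2}/2}. Then there is a constant c depending only on α such that ∫_{|x|<2} ( ∫_{|y|<|x|/2} |K(x−y) − K(x)| |y|^{−1−α} dy )² dx ≤ c. -/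
open MeasureTheory Set

/-- integrability and value of ∫ |y|^s over (-r, r). -/
lemma abs_rpow_helper (r s : ℝ) (hr : 0 < r) (hs : -1 < s) :
    IntegrableOn (fun y : ℝ => |y| ^ s) (Ioo (-r) r) ∧
      ∫ y in Ioo (-r) r, |y| ^ s = 2 * (r ^ (s + 1) / (s + 1)) := by
  have h1 : IntervalIntegrable (fun y : ℝ => |y| ^ s) volume 0 r := by
    have h := intervalIntegral.intervalIntegrable_rpow' (a := 0) (b := r) hs
    rw [intervalIntegrable_iff, uIoc_of_le hr.le] at h ⊢
    exact h.congr_fun (fun y hy => by rw [abs_of_pos hy.1]) measurableSet_Ioc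
  have h2 : IntervalIntegrable (fun y : ℝ => |y| ^ s) volume (-r) 0 := by
    have := ((IntervalIntegrable.iff_comp_neg (f := fun y : ℝ => |y| ^ s) (a := 0) (b := r)).mp h1)
    simp only [abs_neg, neg_zero] at this
    exact this.symm
  have htot : IntervalIntegrable (fun y : ℝ => |y| ^ s) volume (-r) r := h2.trans h1
  have hval0 : ∫ y in (0:ℝ)..r, |y| ^ s = r ^ (s + 1) / (s + 1) := by
    rw [intervalIntegral.integral_congr (g := fun y : ℝ => y ^ s)
      (fun y hy => by
        rw [uIcc_of_le hr.le] at hy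
        rcases eq_or_lt_of_le hy.1 with h | h
        · rw [← h]; simp
        · rw [abs_of_pos h])]
    rw [integral_rpow (Or.inl hs)]
    rw [Real.zero_rpow (by linarith)]
    ring
  have hvalneg : ∫ y in (-r:ℝ)..0, |y| ^ s = r ^ (s + 1) / (s + 1) := by
    have h := intervalIntegral.integral_comp_neg (a := -r) (b := 0) (fun y => |y| ^ s)
    simp only [abs_neg, neg_zero, neg_neg] at h
    rw [h, hval0]
  constructor
  · rw [← intervalIntegrable_iff_integrableOn_Ioo_of_le (by linarith)]
    exact htot
  · rw [← integral_Ioc_eq_integral_Ioo,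
      ← intervalIntegral.integral_of_le (by linarith : (-r:ℝ) ≤ r),
      ← intervalIntegral.integral_add_adjacent_intervals h2 h1, hvalneg, hval0]
    ring

lemma Kfun_diff_bound (α : ℝ) (hα : α ∈ Ioo (0 : ℝ) 1) {x y : ℝ} (hx : 0 < x)
    (hy : |y| ≤ x / 2) :
    |Kfun α (x - y) - Kfun α x| ≤ α / 2 * (x / 2) ^ (α / 2 - 1) * |y| := by
  obtain ⟨hy1, hy2⟩ := abs_le.1 hy
  set s : Set ℝ := Icc (x / 2) (3 * x / 2) with hs
  set f' : ℝ → ℝ := fun t => α / 2 * t ^ (α / 2 - 1) * Real.exp (-(1 / 2) * t ^ (α / 2)) +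
      t ^ (α / 2) * (Real.exp (-(1 / 2) * t ^ (α / 2)) * (-(1 / 2) * (α / 2 * t ^ (α / 2 - 1))))
    with hf'
  have hderiv : ∀ t ∈ s, HasDerivWithinAt (Kfun α) (f' t) s t := by
    intro t ht
    have ht0 : 0 < t := lt_of_lt_of_le (by linarith) ht.1
    have h1 : HasDerivAt (fun u : ℝ => u ^ (α / 2)) (α / 2 * t ^ (α / 2 - 1)) t :=
      Real.hasDerivAt_rpow_const (Or.inl ht0.ne')
    have h2 := (h1.const_mul (-(1 / 2) : ℝ)).exp
    have hD := h1.mul h2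
    refine hD.hasDerivWithinAt.congr (fun u hu => ?_) ?_
    · have hu0 : 0 < u := lt_of_lt_of_le (by linarith) hu.1
      simp [Kfun, abs_of_pos hu0]
    · simp [Kfun, abs_of_pos ht0]
  have hbound : ∀ t ∈ s, ‖f' t‖ ≤ α / 2 * (x / 2) ^ (α / 2 - 1) := by
    intro t ht
    have ht0 : 0 < t := lt_of_lt_of_le (by linarith) ht.1
    set u := t ^ (α / 2) with hu
    have hu0 : 0 ≤ u := Real.rpow_nonneg ht0.le _
    set E := Real.exp (-(1 / 2) * u) with hE
    have hE0 : 0 < E := Real.exp_pos _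
    set P := α / 2 * t ^ (α / 2 - 1) with hP
    have hP0 : 0 ≤ P := by
      have := Real.rpow_nonneg ht0.le (α / 2 - 1)
      have := hα.1
      positivity
    have hft : f' t = P * (E * (1 - u / 2)) := by rw [hf']; ring
    have hEu : E * |1 - u / 2| ≤ 1 := by
      have h1 : |1 - u / 2| ≤ 1 + u / 2 := by
        calc |1 - u / 2| ≤ |(1:ℝ)| + |u / 2| := abs_sub _ _
          _ = 1 + u / 2 := by rw [abs_one, abs_of_nonneg (by linarith)]
      have h2 : (1 : ℝ) + u / 2 ≤ Real.exp (u / 2) := by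
        have := Real.add_one_le_exp (u / 2); linarith
      calc E * |1 - u / 2| ≤ E * Real.exp (u / 2) := by
            apply mul_le_mul_of_nonneg_left (h1.trans h2) hE0.le
        _ = 1 := by rw [hE, ← Real.exp_add]; ring_nf; exact Real.exp_zero
    have hPle : P ≤ α / 2 * (x / 2) ^ (α / 2 - 1) := by
      apply mul_le_mul_of_nonneg_left _ (by linarith [hα.1] : (0:ℝ) ≤ α / 2)
      exact Real.rpow_le_rpow_of_nonpos (by linarith) ht.1 (by linarith [hα.2])
    calc ‖f' t‖ = P * (E * |1 - u / 2|) := by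
          rw [hft, Real.norm_eq_abs, abs_mul, abs_of_nonneg hP0, abs_mul, abs_of_pos hE0]
      _ ≤ P * 1 := mul_le_mul_of_nonneg_left hEu hP0
      _ = P := mul_one P
      _ ≤ _ := hPle
  have hxs : x ∈ s := ⟨by linarith, by linarith⟩
  have hxys : x - y ∈ s := ⟨by linarith, by linarith⟩
  have := Convex.norm_image_sub_le_of_norm_hasDerivWithin_le hderiv hbound
    (convex_Icc _ _) hxs hxys
  simpa [Real.norm_eq_abs, sub_sub_cancel_left, abs_neg] using this

lemma Kfun_diff_bound' (α : ℝ) (hα : α ∈ Ioo (0 : ℝ) 1) {x y : ℝ} (hx : x ≠ 0)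
    (hy : |y| ≤ |x| / 2) :
    |Kfun α (x - y) - Kfun α x| ≤ α / 2 * (|x| / 2) ^ (α / 2 - 1) * |y| := by
  have heven : ∀ t : ℝ, Kfun α (-t) = Kfun α t := fun t => by simp [Kfun]
  rcases hx.lt_or_gt with h | h
  · have hx' : (0:ℝ) < -x := by linarith
    have hy' : |(-y)| ≤ (-x) / 2 := by rw [abs_neg]; rwa [abs_of_neg h] at hy
    have := Kfun_diff_bound α hα hx' hy'
    rw [show -x - -y = -(x - y) by ring, heven, heven, abs_neg] at this
    rwa [abs_of_neg h]
  · have := Kfun_diff_bound α hα h (by rwa [abs_of_pos h] at hy)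
    rwa [abs_of_pos h]

lemma ae_ne_zero : ∀ᵐ y : ℝ, y ≠ 0 := by
  rw [ae_iff]
  simp only [ne_eq, not_not, setOf_eq_eq_singleton]
  exact Real.volume_singleton

lemma inner_bound (α : ℝ) (hα : α ∈ Ioo (0 : ℝ) 1) {x : ℝ} (hx : x ≠ 0) :
    ∫ y in {y : ℝ | |y| < |x| / 2}, |Kfun α (x - y) - Kfun α x| / |y| ^ (1 + α)
      ≤ α / (1 - α) * (|x| / 2) ^ (-(α / 2)) := by
  have hxa : 0 < |x| := abs_pos.2 hx
  have hr : 0 < |x| / 2 := by linarith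
  have h1α : 0 < 1 - α := by linarith [hα.2]
  have hset : {y : ℝ | |y| < |x| / 2} = Ioo (-(|x| / 2)) (|x| / 2) := by
    ext y; simp [abs_lt]
  rw [hset]
  obtain ⟨hint, hval⟩ := abs_rpow_helper (|x| / 2) (-α) hr (by linarith [hα.2])
  set Cx := α / 2 * (|x| / 2) ^ (α / 2 - 1) with hCx
  have hCx0 : 0 ≤ Cx := by
    have := Real.rpow_nonneg hr.le (α / 2 - 1)
    have := hα.1
    positivity
  have hmono : ∫ y in Ioo (-(|x| / 2)) (|x| / 2),
        |Kfun α (x - y) - Kfun α x| / |y| ^ (1 + α)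
      ≤ ∫ y in Ioo (-(|x| / 2)) (|x| / 2), Cx * |y| ^ (-α) := by
    apply integral_mono_of_nonneg
    · exact ae_of_all _ fun y => by positivity
    · exact hint.const_mul Cx
    · filter_upwards [ae_restrict_mem measurableSet_Ioo, ae_restrict_of_ae ae_ne_zero]
        with y hy hy0
      have hyx : |y| ≤ |x| / 2 := by
        rw [abs_le]; exact ⟨hy.1.le, hy.2.le⟩
      have hb := Kfun_diff_bound' α hα hx hyx
      have hya : 0 < |y| := abs_pos.2 hy0
      rw [div_le_iff₀ (Real.rpow_pos_of_pos hya _)]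
      have hyy : |y| ^ (-α) * |y| ^ (1 + α) = |y| := by
        rw [← Real.rpow_add hya, show -α + (1 + α) = 1 by ring, Real.rpow_one]
      refine hb.trans (le_of_eq ?_)
      rw [mul_assoc Cx, hyy, hCx]
  refine hmono.trans (le_of_eq ?_)
  have hAR : (|x| / 2) ^ (α / 2 - 1) * (|x| / 2) ^ (-α + 1) = (|x| / 2) ^ (-(α / 2)) := by
    rw [← Real.rpow_add hr]; ring_nf
  have key : ∀ A R : ℝ, α / 2 * A * (2 * (R / (-α + 1))) = α / (1 - α) * (A * R) := by
    intro A R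
    rw [show ((-α + 1) : ℝ) = 1 - α by ring, div_eq_mul_inv R, div_eq_mul_inv α,
      div_eq_mul_inv α]
    ring
  rw [integral_const_mul, hval, hCx, key, hAR]

/-- For `α ∈ (0,1)`,
`∫_{|x|<2} ( ∫_{|y|<|x|/2} |K(x−y) − K(x)| |y|^{−1−α} dy )² dx ≤ c` for a constant
`c` depending only on `α`. -/
theorem I3_bound (α : ℝ) (hα : α ∈ Ioo (0 : ℝ) 1) :
    ∃ c : ℝ, 0 < c ∧
      ∫⁻ x in {x : ℝ | |x| < 2}, ENNReal.ofReal
          ((∫ y in {y : ℝ | |y| < |x| / 2},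
              |Kfun α (x - y) - Kfun α x| / |y| ^ (1 + α)) ^ 2)
        ≤ ENNReal.ofReal c := by
  have h1α : 0 < 1 - α := by linarith [hα.2]
  set A : ℝ := (α / (1 - α)) ^ 2 * 2 ^ α with hA
  have hA0 : 0 < A := by
    apply mul_pos (pow_pos (div_pos hα.1 h1α) 2) (Real.rpow_pos_of_pos two_pos α)
  set c : ℝ := A * (2 * ((2 : ℝ) ^ (-α + 1) / (-α + 1))) with hc
  have hc0 : 0 < c := by
    apply mul_pos hA0
    apply mul_pos two_pos
    exact div_pos (Real.rpow_pos_of_pos two_pos _) (by linarith)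
  refine ⟨c, hc0, ?_⟩
  have hS : {x : ℝ | |x| < 2} = Ioo (-2 : ℝ) 2 := by ext z; simp [abs_lt]
  obtain ⟨hint2, hval2⟩ := abs_rpow_helper 2 (-α) two_pos (by linarith)
  set g : ℝ → ℝ := fun x => A * |x| ^ (-α) with hg
  have step1 : ∫⁻ x in {x : ℝ | |x| < 2}, ENNReal.ofReal
          ((∫ y in {y : ℝ | |y| < |x| / 2},
              |Kfun α (x - y) - Kfun α x| / |y| ^ (1 + α)) ^ 2)
      ≤ ∫⁻ x in {x : ℝ | |x| < 2}, ENNReal.ofReal (g x) := by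
    apply lintegral_mono_ae
    filter_upwards [ae_restrict_of_ae ae_ne_zero] with x hx0
    apply ENNReal.ofReal_le_ofReal
    have hxa : 0 < |x| := abs_pos.2 hx0
    have hr : 0 < |x| / 2 := by linarith
    have hf0 : 0 ≤ ∫ y in {y : ℝ | |y| < |x| / 2},
        |Kfun α (x - y) - Kfun α x| / |y| ^ (1 + α) :=
      integral_nonneg fun y => by positivity
    have hfb := inner_bound α hα hx0
    calc (∫ y in {y : ℝ | |y| < |x| / 2},
            |Kfun α (x - y) - Kfun α x| / |y| ^ (1 + α)) ^ 2
        ≤ (α / (1 - α) * (|x| / 2) ^ (-(α / 2))) ^ 2 := by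
          apply pow_le_pow_left₀ hf0 hfb
      _ = (α / (1 - α)) ^ 2 * ((|x| / 2) ^ (-(α / 2))) ^ 2 := by ring
      _ = (α / (1 - α)) ^ 2 * (|x| / 2) ^ (-α) := by
          rw [← Real.rpow_natCast ((|x| / 2) ^ (-(α / 2))) 2, ← Real.rpow_mul hr.le]
          norm_num
      _ = g x := by
          rw [hg, hA, Real.div_rpow (abs_nonneg x) (by norm_num : (0:ℝ) ≤ 2),
            Real.rpow_neg (by norm_num : (0:ℝ) ≤ 2)]
          field_simp
  have hgint : IntegrableOn g (Ioo (-2 : ℝ) 2) := hint2.const_mul A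
  have step2 : ∫⁻ x in {x : ℝ | |x| < 2}, ENNReal.ofReal (g x)
      = ENNReal.ofReal (∫ x in Ioo (-2 : ℝ) 2, g x) := by
    rw [hS]
    exact (ofReal_integral_eq_lintegral_ofReal hgint
      (ae_of_all _ fun x => by positivity)).symm
  have step3 : ∫ x in Ioo (-2 : ℝ) 2, g x = c := by
    rw [hg, integral_const_mul, hval2, hc]
  refine step1.trans ?_
  rw [step2, step3]
end

section
/- Let α ∈ (0,1), c > 0, and let m : ℝ → ℝ be a bounded differentiable function on ℝ∖{0} with ‖m‖_∞ ≤ c and |m′(x)| ≤ c/|x| for all x ≠ 0. Then for every x ≠ 0 the integral defining D_α[m](x) converges absolutely and there is a constant c′ (depending only on α and c) such that |D_α[m](x)| ≤ c′/|x|^α for all x ∈ ℝ∖{0}. (Hence every classical Mikhlin multiplier satisfies the hypotheses of the fractional Mikhlin theorem.) -/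
open MeasureTheory Set

/-- Every classical Mikhlin multiplier satisfies the hypotheses of the fractional
Mikhlin theorem: if `m` is bounded by `c`, differentiable away from `0` with
`|m′(x)| ≤ c/|x|`, then for every `x ≠ 0` the integral defining `D_α[m](x)`
converges absolutely and `|D_α[m](x)| ≤ c′/|x|^α` for a constant `c′` depending
only on `α` and `c`. -/
theorem classical_mikhlin_implies_fractional (α c : ℝ)
    (hα : α ∈ Ioo (0 : ℝ) 1) (hc : 0 < c)
    (m : ℝ → ℝ) (hmb : ∀ x, |m x| ≤ c)
    (hdiff : ∀ x : ℝ, x ≠ 0 → DifferentiableAt ℝ m x)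
    (hder : ∀ x : ℝ, x ≠ 0 → |deriv m x| ≤ c / |x|) :
    ∃ c' : ℝ, 0 < c' ∧ ∀ x : ℝ, x ≠ 0 →
      IntegrableOn (fun y => (m x - m (x - y)) / y ^ (1 + α)) (Ioi (0 : ℝ)) ∧
      |Dpos α m x| ≤ c' / |x| ^ α := by
  obtain ⟨hα0, hα1⟩ := hα
  have h1α : (0:ℝ) < 1 - α := by linarith
  have hΓ : 0 < Real.Gamma (1 - α) := Real.Gamma_pos_of_pos h1α
  -- the constant
  set K : ℝ := 2 * c * (2:ℝ) ^ (α - 1) / (1 - α) + 2 * c * (2:ℝ) ^ α / α with hK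
  have hKpos : 0 < K := by
    have h2a : (0:ℝ) < (2:ℝ) ^ (α - 1) := Real.rpow_pos_of_pos (by norm_num) _
    have h2b : (0:ℝ) < (2:ℝ) ^ α := Real.rpow_pos_of_pos (by norm_num) _
    have : 0 < 2 * c * (2:ℝ) ^ (α - 1) / (1 - α) := by positivity
    have : 0 < 2 * c * (2:ℝ) ^ α / α := by positivity
    positivity
  refine ⟨α / Real.Gamma (1 - α) * K, by positivity, fun x hx => ?_⟩
  have hx' : (0:ℝ) < |x| := abs_pos.mpr hx
  set r : ℝ := |x| / 2 with hrdef
  have hr : 0 < r := by positivity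
  -- measurability of m
  have hmmeas : AEStronglyMeasurable m (volume : Measure ℝ) := by
    have hcont : ContinuousOn m ({(0:ℝ)}ᶜ) := fun ξ hξ =>
      ((hdiff ξ hξ).continuousAt).continuousWithinAt
    have h1 := hcont.aestronglyMeasurable (μ := volume) (measurableSet_singleton (0:ℝ)).compl
    have h2 : (volume : Measure ℝ).restrict ({(0:ℝ)}ᶜ) = volume := by
      rw [Measure.restrict_congr_set (t := univ), Measure.restrict_univ]
      rw [ae_eq_univ]
      simp
    rwa [h2] at h1
  set f : ℝ → ℝ := fun y => (m x - m (x - y)) / y ^ (1 + α) with hf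
  have hfmeas : AEStronglyMeasurable f (volume : Measure ℝ) := by
    have hcomp : AEStronglyMeasurable (fun y => m (x - y)) (volume : Measure ℝ) :=
      hmmeas.comp_quasiMeasurePreserving
        (Measure.measurePreserving_sub_left volume x).quasiMeasurePreserving
    have hden : Continuous fun y : ℝ => y ^ (1 + α) := by
      rw [continuous_iff_continuousAt]
      exact fun y => Real.continuousAt_rpow_const y (1 + α) (Or.inr (by linarith))
    have hfeq : f = fun y => (m x - m (x - y)) * (y ^ (1 + α))⁻¹ :=
      funext fun y => div_eq_mul_inv _ _
    rw [hfeq]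
    exact (aestronglyMeasurable_const.sub hcomp).mul
      ((measurable_inv.comp hden.measurable).aestronglyMeasurable)
  -- pointwise bound on (0, r]
  have key : ∀ y ∈ Ioc (0:ℝ) r, |m x - m (x - y)| ≤ 2 * c / |x| * y := by
    intro y hy
    obtain ⟨hy0, hyr⟩ := hy
    rcases hx.lt_or_gt with hneg | hpos
    · -- x < 0 : work on Iic (x/2)
      have habs : |x| = -x := abs_of_neg hneg
      have hsub : ∀ ξ ∈ Iic (x/2), ξ ≠ 0 := fun ξ hξ => by
        have : ξ ≤ x/2 := hξ
        nlinarith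
      have hbd : ∀ ξ ∈ Iic (x/2), ‖deriv m ξ‖ ≤ 2 * c / |x| := by
        intro ξ hξ
        have hξ2 : ξ ≤ x/2 := hξ
        have hξabs : |x|/2 ≤ |ξ| := by
          rw [habs, abs_of_neg (by nlinarith : ξ < 0)]; linarith
        calc ‖deriv m ξ‖ ≤ c / |ξ| := hder ξ (hsub ξ hξ)
          _ ≤ c / (|x|/2) := by
              apply div_le_div_of_nonneg_left hc.le (by positivity) hξabs
          _ = 2 * c / |x| := by field_simp
      have hmem1 : x - y ∈ Iic (x/2) := by
        simp only [mem_Iic]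
        have : y ≥ 0 := hy0.le
        nlinarith [hyr, habs]
      have hmem2 : x ∈ Iic (x/2) := by
        simp only [mem_Iic]; linarith
      have := (convex_Iic (x/2)).norm_image_sub_le_of_norm_hasDerivWithin_le
        (f := m) (f' := deriv m)
        (fun ξ hξ => ((hdiff ξ (hsub ξ hξ)).hasDerivAt).hasDerivWithinAt)
        hbd hmem1 hmem2
      calc |m x - m (x - y)| ≤ 2 * c / |x| * ‖x - (x - y)‖ := this
        _ = 2 * c / |x| * y := by
            rw [show x - (x - y) = y by ring, Real.norm_eq_abs, abs_of_pos hy0]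
    · -- x > 0 : work on Ici (x/2)
      have habs : |x| = x := abs_of_pos hpos
      have hsub : ∀ ξ ∈ Ici (x/2), ξ ≠ 0 := fun ξ hξ => by
        have : x/2 ≤ ξ := hξ
        nlinarith
      have hbd : ∀ ξ ∈ Ici (x/2), ‖deriv m ξ‖ ≤ 2 * c / |x| := by
        intro ξ hξ
        have hξ2 : x/2 ≤ ξ := hξ
        have hξabs : |x|/2 ≤ |ξ| := by
          rw [habs, abs_of_pos (by nlinarith : 0 < ξ)]; linarith
        calc ‖deriv m ξ‖ ≤ c / |ξ| := hder ξ (hsub ξ hξ)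
          _ ≤ c / (|x|/2) := by
              apply div_le_div_of_nonneg_left hc.le (by positivity) hξabs
          _ = 2 * c / |x| := by field_simp
      have hmem1 : x - y ∈ Ici (x/2) := by
        simp only [mem_Ici]
        nlinarith [hyr, habs]
      have hmem2 : x ∈ Ici (x/2) := by
        simp only [mem_Ici]; linarith
      have := (convex_Ici (x/2)).norm_image_sub_le_of_norm_hasDerivWithin_le
        (f := m) (f' := deriv m)
        (fun ξ hξ => ((hdiff ξ (hsub ξ hξ)).hasDerivAt).hasDerivWithinAt)
        hbd hmem1 hmem2
      calc |m x - m (x - y)| ≤ 2 * c / |x| * ‖x - (x - y)‖ := this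
        _ = 2 * c / |x| * y := by
            rw [show x - (x - y) = y by ring, Real.norm_eq_abs, abs_of_pos hy0]
  -- norm of the integrand
  have hnorm : ∀ y : ℝ, 0 < y → ‖f y‖ = |m x - m (x - y)| / y ^ (1 + α) := by
    intro y hy
    have hpow : (0:ℝ) < y ^ (1 + α) := Real.rpow_pos_of_pos hy _
    rw [Real.norm_eq_abs, hf, abs_div, abs_of_pos hpow]
  -- majorants
  set g₁ : ℝ → ℝ := fun y => 2 * c / |x| * y ^ (-α) with hg₁
  set g₂ : ℝ → ℝ := fun y => 2 * c * y ^ (-(1 + α)) with hg₂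
  have hg₁int : IntegrableOn g₁ (Ioc (0:ℝ) r) := by
    have : IntegrableOn (fun y : ℝ => y ^ (-α)) (Ioc (0:ℝ) r) := by
      have := intervalIntegral.intervalIntegrable_rpow' (a := 0) (b := r)
        (r := -α) (by linarith)
      rwa [intervalIntegrable_iff_integrableOn_Ioc_of_le hr.le] at this
    exact this.const_mul _
  have hg₂int : IntegrableOn g₂ (Ioi r) := by
    have : IntegrableOn (fun y : ℝ => y ^ (-(1 + α))) (Ioi r) :=
      integrableOn_Ioi_rpow_of_lt (by linarith) hr
    exact this.const_mul _
  -- bounds on each piece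
  have hb₁ : ∀ y ∈ Ioc (0:ℝ) r, ‖f y‖ ≤ g₁ y := by
    intro y hy
    have hy0 : 0 < y := hy.1
    have hpow : (0:ℝ) < y ^ (1 + α) := Real.rpow_pos_of_pos hy0 _
    rw [hnorm y hy0]
    have h1 : |m x - m (x - y)| / y ^ (1 + α) ≤ (2 * c / |x| * y) / y ^ (1 + α) :=
      div_le_div_of_nonneg_right (key y hy) hpow.le
    refine h1.trans_eq ?_
    simp only [hg₁]
    have : (2 * c / |x| * y) / y ^ (1 + α) = 2 * c / |x| * (y ^ (1:ℝ) / y ^ (1 + α)) := by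
      rw [Real.rpow_one]; ring
    rw [this, ← Real.rpow_sub hy0]
    norm_num
  have hb₂ : ∀ y ∈ Ioi r, ‖f y‖ ≤ g₂ y := by
    intro y hy
    have hy0 : 0 < y := hr.trans hy
    have hpow : (0:ℝ) < y ^ (1 + α) := Real.rpow_pos_of_pos hy0 _
    rw [hnorm y hy0]
    have hnum : |m x - m (x - y)| ≤ 2 * c := by
      calc |m x - m (x - y)| ≤ |m x| + |m (x - y)| := abs_sub _ _
        _ ≤ c + c := add_le_add (hmb x) (hmb (x - y))
        _ = 2 * c := by ring
    have h1 : |m x - m (x - y)| / y ^ (1 + α) ≤ 2 * c / y ^ (1 + α) :=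
      div_le_div_of_nonneg_right hnum hpow.le
    refine h1.trans_eq ?_
    simp only [hg₂]
    rw [Real.rpow_neg hy0.le, div_eq_mul_inv]
  -- integrability of f on the two pieces
  have hf₁ : IntegrableOn f (Ioc (0:ℝ) r) := by
    refine Integrable.mono' hg₁int (hfmeas.restrict) ?_
    exact (ae_restrict_iff' measurableSet_Ioc).2 (Filter.Eventually.of_forall hb₁)
  have hf₂ : IntegrableOn f (Ioi r) := by
    refine Integrable.mono' hg₂int (hfmeas.restrict) ?_
    exact (ae_restrict_iff' measurableSet_Ioi).2 (Filter.Eventually.of_forall hb₂)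
  have hunion : Ioc (0:ℝ) r ∪ Ioi r = Ioi (0:ℝ) := Ioc_union_Ioi_eq_Ioi hr.le
  have hfint : IntegrableOn f (Ioi (0:ℝ)) := by
    rw [← hunion]; exact hf₁.union hf₂
  refine ⟨hfint, ?_⟩
  -- compute the majorant integrals
  have hI₁ : ∫ y in Ioc (0:ℝ) r, g₁ y = 2 * c / |x| * (r ^ (1 - α) / (1 - α)) := by
    simp only [hg₁]
    rw [MeasureTheory.integral_const_mul,
      ← intervalIntegral.integral_of_le hr.le,
      integral_rpow (Or.inl (by linarith : (-1:ℝ) < -α))]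
    rw [Real.zero_rpow (ne_of_gt (by linarith)), show -α + 1 = 1 - α by ring]
    ring
  have hI₂ : ∫ y in Ioi r, g₂ y = 2 * c * (r ^ (-α) / α) := by
    simp only [hg₂]
    rw [MeasureTheory.integral_const_mul,
      integral_Ioi_rpow_of_lt (by linarith : -(1+α) < -1) hr]
    rw [show -(1 + α) + 1 = -α by ring]
    field_simp
  -- the norm integral bound
  have hInorm : ∫ y in Ioi (0:ℝ), ‖f y‖ ≤ K * |x| ^ (-α) := by
    have hsplit : ∫ y in Ioi (0:ℝ), ‖f y‖
        = (∫ y in Ioc (0:ℝ) r, ‖f y‖) + ∫ y in Ioi r, ‖f y‖ := by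
      rw [← hunion]
      exact setIntegral_union (Ioc_disjoint_Ioi le_rfl) measurableSet_Ioi
        hf₁.norm hf₂.norm
    have hle₁ : ∫ y in Ioc (0:ℝ) r, ‖f y‖ ≤ ∫ y in Ioc (0:ℝ) r, g₁ y :=
      setIntegral_mono_on hf₁.norm hg₁int measurableSet_Ioc hb₁
    have hle₂ : ∫ y in Ioi r, ‖f y‖ ≤ ∫ y in Ioi r, g₂ y :=
      setIntegral_mono_on hf₂.norm hg₂int measurableSet_Ioi hb₂
    rw [hsplit]
    have hcalc : 2 * c / |x| * (r ^ (1 - α) / (1 - α)) + 2 * c * (r ^ (-α) / α)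
        = K * |x| ^ (-α) := by
      have e1 : r ^ (1 - α) = |x| ^ (1 - α) / (2:ℝ) ^ (1 - α) := by
        rw [hrdef, Real.div_rpow hx'.le (by norm_num : (0:ℝ) ≤ 2)]
      have e2 : r ^ (-α) = |x| ^ (-α) / (2:ℝ) ^ (-α) := by
        rw [hrdef, Real.div_rpow hx'.le (by norm_num : (0:ℝ) ≤ 2)]
      have e3 : |x| ^ (1 - α) = |x| * |x| ^ (-α) := by
        rw [show (1:ℝ) - α = 1 + -α by ring, Real.rpow_add hx', Real.rpow_one]
      have e4 : (2:ℝ) ^ (α - 1) = ((2:ℝ) ^ (1 - α))⁻¹ := by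
        rw [← Real.rpow_neg (by norm_num : (0:ℝ) ≤ 2)]
        norm_num
      have e5 : (2:ℝ) ^ α = ((2:ℝ) ^ (-α))⁻¹ := by
        rw [← Real.rpow_neg (by norm_num : (0:ℝ) ≤ 2)]
        norm_num
      have h2a : (0:ℝ) < (2:ℝ) ^ (1 - α) := Real.rpow_pos_of_pos (by norm_num) _
      have h2b : (0:ℝ) < (2:ℝ) ^ (-α) := Real.rpow_pos_of_pos (by norm_num) _
      rw [e1, e2, e3, hK, e4, e5]
      field_simp
    refine (add_le_add hle₁ hle₂).trans_eq ?_
    rw [hI₁, hI₂, hcalc]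
  -- conclude
  have habsint : |∫ y in Ioi (0:ℝ), f y| ≤ K * |x| ^ (-α) := by
    calc |∫ y in Ioi (0:ℝ), f y| ≤ ∫ y in Ioi (0:ℝ), ‖f y‖ :=
        norm_integral_le_integral_norm f
      _ ≤ K * |x| ^ (-α) := hInorm
  have hDpos : |Dpos α m x| = α / Real.Gamma (1 - α) * |∫ y in Ioi (0:ℝ), f y| := by
    rw [Dpos, abs_mul, abs_of_pos (by positivity : (0:ℝ) < α / Real.Gamma (1 - α))]
  rw [hDpos]
  have hfinal : α / Real.Gamma (1 - α) * |∫ y in Ioi (0:ℝ), f y|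
      ≤ α / Real.Gamma (1 - α) * (K * |x| ^ (-α)) :=
    mul_le_mul_of_nonneg_left habsint (by positivity)
  refine hfinal.trans_eq ?_
  rw [Real.rpow_neg hx'.le, div_eq_mul_inv]
  ring
end
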